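/- arXiv:2512.16190 — 11 statements merged into one kernel-verified Lean document; each statement's English description precedes it below -/
import Mathlib

section
/- For any positive integer q, Σ_{n=0}^{q-1} c_q(n)^2 = q·φ(q). -/
open Finset Complex

noncomputable def ramanujanSum (q : ℕ) (n : ℤ) : ℂ :=
  ∑ k ∈ (Finset.Icc 1 q).filter (fun k => Nat.gcd k q = 1),
    Complex.exp (2 * (Real.pi : ℂ) * Complex.I * (k : ℂ) * (n : ℂ) / (q : ℂ))

private lemma gcd_sub_aux (q j : ℕ) (hj : j ≤ q) (h : Nat.gcd j q = 1) :
    Nat.gcd (q - j) q = 1 := by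
  have h2 : (q - j).Coprime j := (Nat.coprime_sub_self_left hj).mpr (Nat.Coprime.symm h)
  have h4 : (q - j).Coprime (j + (q - j)) := Nat.coprime_add_self_right.mpr h2
  rwa [show j + (q - j) = q from by omega] at h4

private lemma sum_zeta_pow (q m : ℕ) (hq : 0 < q) :
    ∑ n ∈ Finset.range q, (Complex.exp (2 * (Real.pi : ℂ) * Complex.I / q)) ^ (m * n)
      = if q ∣ m then (q : ℂ) else 0 := by
  have hζ := Complex.isPrimitiveRoot_exp q hq.ne'
  set ζ := Complex.exp (2 * (Real.pi : ℂ) * Complex.I / q) with hz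
  simp_rw [pow_mul]
  by_cases h : q ∣ m
  · have : ζ ^ m = 1 := (hζ.pow_eq_one_iff_dvd m).mpr h
    simp [this, h]
  · have hne : ζ ^ m ≠ 1 := fun hh => h ((hζ.pow_eq_one_iff_dvd m).mp hh)
    rw [geom_sum_eq hne]
    have : (ζ ^ m) ^ q = 1 := by
      rw [← pow_mul, mul_comm, pow_mul, hζ.pow_eq_one, one_pow]
    simp [this, h]

private lemma filter_eq_totient_set (q : ℕ) (hq : 2 ≤ q) :
    (Finset.Icc 1 q).filter (fun k => Nat.gcd k q = 1) =
      (Finset.range q).filter q.Coprime := by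
  ext a
  simp only [Finset.mem_filter, Finset.mem_Icc, Finset.mem_range, Nat.Coprime, Nat.gcd_comm a q]
  constructor
  · rintro ⟨⟨h1, h2⟩, h3⟩
    refine ⟨lt_of_le_of_ne h2 ?_, h3⟩
    rintro rfl; rw [Nat.gcd_self] at h3; omega
  · rintro ⟨h1, h3⟩
    refine ⟨⟨?_, h1.le⟩, h3⟩
    rcases Nat.eq_zero_or_pos a with rfl | h
    · rw [Nat.gcd_zero_right] at h3; omega
    · exact h

theorem ramanujanSum_sum_sq (q : ℕ) (hq : 0 < q) :
    ∑ n ∈ Finset.range q, (ramanujanSum q (n : ℤ)) ^ 2 =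
      (q : ℂ) * (Nat.totient q : ℂ) := by
  rcases eq_or_lt_of_le (Nat.succ_le_of_lt hq) with h1 | hq2
  · -- q = 1
    subst h1  -- may need adjusting
    simp [ramanujanSum]
  · have hq2 : 2 ≤ q := hq2
    set ζ := Complex.exp (2 * (Real.pi : ℂ) * Complex.I / q) with hz
    set S := (Finset.Icc 1 q).filter (fun k => Nat.gcd k q = 1) with hS
    have hram : ∀ n : ℕ, ramanujanSum q (n : ℤ) = ∑ k ∈ S, ζ ^ (k * n) := by
      intro n
      unfold ramanujanSum
      refine Finset.sum_congr rfl fun k _ => ?_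
      rw [hz, ← Complex.exp_nat_mul]
      congr 1
      push_cast
      ring
    calc ∑ n ∈ Finset.range q, (ramanujanSum q (n : ℤ)) ^ 2
        = ∑ n ∈ Finset.range q, ∑ j ∈ S, ∑ k ∈ S, ζ ^ ((j + k) * n) := by
          refine Finset.sum_congr rfl fun n _ => ?_
          rw [hram n, sq, Finset.sum_mul_sum]
          refine Finset.sum_congr rfl fun j _ => Finset.sum_congr rfl fun k _ => ?_
          rw [← pow_add, add_mul]
      _ = ∑ j ∈ S, ∑ k ∈ S, ∑ n ∈ Finset.range q, ζ ^ ((j + k) * n) := by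
          rw [Finset.sum_comm]
          exact Finset.sum_congr rfl fun j _ => Finset.sum_comm
      _ = ∑ j ∈ S, ∑ k ∈ S, (if q ∣ j + k then (q : ℂ) else 0) := by
          refine Finset.sum_congr rfl fun j _ => Finset.sum_congr rfl fun k _ => ?_
          exact sum_zeta_pow q (j + k) hq
      _ = ∑ _j ∈ S, (q : ℂ) := by
          refine Finset.sum_congr rfl fun j hj => ?_
          rw [hS, Finset.mem_filter, Finset.mem_Icc] at hj
          obtain ⟨⟨hj1, hjq⟩, hjg⟩ := hj
          have hjlt : j < q := by
            rcases lt_or_eq_of_le hjq with h | rfl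
            · exact h
            · rw [Nat.gcd_self] at hjg; omega
          have hmem : q - j ∈ S := by
            rw [hS, Finset.mem_filter, Finset.mem_Icc]
            exact ⟨⟨by omega, by omega⟩, gcd_sub_aux q j hjq hjg⟩
          rw [Finset.sum_eq_single_of_mem (q - j) hmem]
          · rw [if_pos (by exact ⟨1, by omega⟩)]
          · intro k hk hne
            rw [hS, Finset.mem_filter, Finset.mem_Icc] at hk
            obtain ⟨⟨hk1, hkq⟩, hkg⟩ := hk
            have hklt : k < q := by
              rcases lt_or_eq_of_le hkq with h | rfl
              · exact h
              · rw [Nat.gcd_self] at hkg; omega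
            rw [if_neg]
            rintro ⟨c, hc⟩
            have hc2 : c < 2 := by
              have : q * c < q * 2 := by omega
              exact Nat.lt_of_mul_lt_mul_left this
            have hc1 : c ≠ 0 := by rintro rfl; omega
            have : c = 1 := by omega
            subst this
            exact hne (by omega)
      _ = (q : ℂ) * (Nat.totient q : ℂ) := by
          rw [Finset.sum_const, hS, filter_eq_totient_set q hq2]
          rw [Nat.totient]
          ring
end

section
/- (Orthogonality of Ramanujan sums) For distinct positive integers q ≠ q' and any integer l, Σ_{n=0}^{L−1} c_{q'}(n)·c_q(n−l) = 0, where L = lcm(q, q'). -/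
open Finset Complex

lemma exp_pow_aux (q c k : ℕ) (hq : (q : ℂ) ≠ 0) :
    Complex.exp (2 * (Real.pi : ℂ) * Complex.I * k / q) ^ (q * c) = 1 := by
  rw [← Complex.exp_nat_mul]
  have h : ((q * c : ℕ) : ℂ) * (2 * (Real.pi : ℂ) * Complex.I * k / q)
      = (((k * c : ℕ) : ℤ) : ℂ) * (2 * (Real.pi : ℂ) * Complex.I) := by
    push_cast
    field_simp
  rw [h, Complex.exp_int_mul_two_pi_mul_I]

lemma ramanujan_key (q q' : ℕ) (hq : 0 < q) (hq' : 0 < q') (hne : q ≠ q')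
    (k j : ℕ) (hkc : Nat.gcd k q' = 1) (hjc : Nat.gcd j q = 1) :
    Complex.exp (2 * (Real.pi : ℂ) * Complex.I * k / q' +
      2 * (Real.pi : ℂ) * Complex.I * j / q) ≠ 1 := by
  intro h
  obtain ⟨m, hm⟩ := Complex.exp_eq_one_iff.mp h
  have hq0 : (q : ℂ) ≠ 0 := Nat.cast_ne_zero.mpr hq.ne'
  have hq'0 : (q' : ℂ) ≠ 0 := Nat.cast_ne_zero.mpr hq'.ne'
  have hpi : (Real.pi : ℂ) ≠ 0 := by exact_mod_cast Real.pi_ne_zero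
  have hI : Complex.I ≠ 0 := Complex.I_ne_zero
  have h2ne : (2 * (Real.pi : ℂ) * Complex.I) ≠ 0 := by
    simp [hpi, hI]
  have hC : (k : ℂ) * q + (j : ℂ) * q' = (m : ℂ) * q' * q := by
    apply mul_left_cancel₀ h2ne
    field_simp at hm
    linear_combination (2 * (Real.pi : ℂ) * Complex.I) * hm
  have hZ : (k : ℤ) * q + (j : ℤ) * q' = m * q' * q := by exact_mod_cast hC
  have hd1 : (q' : ℤ) ∣ (k : ℤ) * q := ⟨m * q - j, by linarith⟩
  have hd2 : (q : ℤ) ∣ (j : ℤ) * q' := ⟨m * q' - k, by linarith⟩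
  have hn1 : q' ∣ k * q := by exact_mod_cast hd1
  have hn2 : q ∣ j * q' := by exact_mod_cast hd2
  have h1 : q' ∣ q := (Nat.Coprime.dvd_of_dvd_mul_left (Nat.coprime_comm.mp hkc) hn1)
  have h2 : q ∣ q' := (Nat.Coprime.dvd_of_dvd_mul_left (Nat.coprime_comm.mp hjc) hn2)
  exact hne (Nat.dvd_antisymm h2 h1)

theorem ramanujanSum_orthogonality (q q' : ℕ) (hq : 0 < q) (hq' : 0 < q')
    (hne : q ≠ q') (l : ℤ) :
    ∑ n ∈ Finset.range (Nat.lcm q q'),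
      ramanujanSum q' (n : ℤ) * ramanujanSum q ((n : ℤ) - l) = 0 := by
  have hq0 : (q : ℂ) ≠ 0 := Nat.cast_ne_zero.mpr hq.ne'
  have hq'0 : (q' : ℂ) ≠ 0 := Nat.cast_ne_zero.mpr hq'.ne'
  simp only [ramanujanSum, Finset.sum_mul_sum]
  rw [Finset.sum_comm]
  refine Finset.sum_eq_zero fun k hk => ?_
  rw [Finset.sum_comm]
  refine Finset.sum_eq_zero fun j hj => ?_
  simp only [Finset.mem_filter, Finset.mem_Icc] at hk hj
  set A : ℂ := 2 * (Real.pi : ℂ) * Complex.I * k / q' with hA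
  set B : ℂ := 2 * (Real.pi : ℂ) * Complex.I * j / q with hB
  set z : ℂ := Complex.exp (A + B) with hz
  have hterm : ∀ n : ℕ,
      Complex.exp (2 * (Real.pi : ℂ) * Complex.I * k * n / q') *
        Complex.exp (2 * (Real.pi : ℂ) * Complex.I * j * ((n : ℤ) - l : ℤ) / q)
      = z ^ n * Complex.exp (2 * (Real.pi : ℂ) * Complex.I * j * (-l) / q) := by
    intro n
    rw [hz, ← Complex.exp_nat_mul, ← Complex.exp_add, ← Complex.exp_add]
    congr 1
    push_cast
    ring
  calc ∑ n ∈ Finset.range (Nat.lcm q q'),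
        Complex.exp (2 * (Real.pi : ℂ) * Complex.I * k * n / q') *
          Complex.exp (2 * (Real.pi : ℂ) * Complex.I * j * ((n : ℤ) - l : ℤ) / q)
      = (∑ n ∈ Finset.range (Nat.lcm q q'), z ^ n) *
          Complex.exp (2 * (Real.pi : ℂ) * Complex.I * j * (-l) / q) := by
        rw [Finset.sum_mul]
        exact Finset.sum_congr rfl fun n _ => hterm n
    _ = 0 := by
        have hzne : z ≠ 1 :=
          ramanujan_key q q' hq hq' hne k j hk.2 hj.2
        rw [geom_sum_eq hzne]
        have hc' : q' * (Nat.lcm q q' / q') = Nat.lcm q q' :=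
          Nat.mul_div_cancel' (Nat.dvd_lcm_right q q')
        have hc : q * (Nat.lcm q q' / q) = Nat.lcm q q' :=
          Nat.mul_div_cancel' (Nat.dvd_lcm_left q q')
        have h1 : Complex.exp A ^ Nat.lcm q q' = 1 := by
          conv_lhs => rw [← hc']
          exact exp_pow_aux q' _ k hq'0
        have h2 : Complex.exp B ^ Nat.lcm q q' = 1 := by
          conv_lhs => rw [← hc]
          exact exp_pow_aux q _ j hq0
        have hzL : z ^ Nat.lcm q q' = 1 := by
          rw [hz, Complex.exp_add, mul_pow, h1, h2, one_mul]
        rw [hzL, sub_self, zero_div, zero_mul]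
end

section
/- Let N be a positive integer, q a divisor of N, and m ∈ {0,1,…,N−1}. Then Σ_{n=0}^{N−1} c_q(n)·e^{−2πimn/N} equals N if m = kN/q for some integer k with gcd(k,q) = 1, and equals 0 otherwise. -/
open Finset Complex

lemma sum_exp_div (N : ℕ) (hN : 0 < N) (a : ℤ) :
    ∑ n ∈ Finset.range N, Complex.exp (2 * (Real.pi : ℂ) * Complex.I * (a : ℂ) * (n : ℂ) / (N : ℂ)) =
    if (N : ℤ) ∣ a then (N : ℂ) else 0 := by
  have hN0 : (N : ℂ) ≠ 0 := Nat.cast_ne_zero.mpr hN.ne'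
  have hterm : ∀ n : ℕ, Complex.exp (2 * (Real.pi : ℂ) * Complex.I * (a : ℂ) * (n : ℂ) / (N : ℂ))
      = Complex.exp (2 * (Real.pi : ℂ) * Complex.I * (a : ℂ) / (N : ℂ)) ^ n := by
    intro n
    rw [← Complex.exp_nat_mul]
    ring_nf
  simp_rw [hterm]
  split_ifs with h
  · obtain ⟨c, rfl⟩ := h
    have : Complex.exp (2 * (Real.pi : ℂ) * Complex.I * ((N * c : ℤ) : ℂ) / (N : ℂ)) = 1 := by
      have : 2 * (Real.pi : ℂ) * Complex.I * ((N * c : ℤ) : ℂ) / (N : ℂ) = (c : ℂ) * (2 * Real.pi * Complex.I) := by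
        push_cast
        field_simp
      rw [this, Complex.exp_int_mul_two_pi_mul_I]
    push_cast at this
    simp [this]
  · set ζ := Complex.exp (2 * (Real.pi : ℂ) * Complex.I * (a : ℂ) / (N : ℂ)) with hζ
    have hζN : ζ ^ N = 1 := by
      rw [hζ, ← Complex.exp_nat_mul]
      have : (N : ℂ) * (2 * (Real.pi : ℂ) * Complex.I * (a : ℂ) / (N : ℂ)) = (a : ℂ) * (2 * Real.pi * Complex.I) := by
        field_simp
      rw [this, Complex.exp_int_mul_two_pi_mul_I]
    have hζ1 : ζ ≠ 1 := by
      intro h1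
      rw [hζ, Complex.exp_eq_one_iff] at h1
      obtain ⟨c, hc⟩ := h1
      apply h
      refine ⟨c, ?_⟩
      have h2 : (2 : ℂ) * Real.pi * Complex.I ≠ 0 := by
        simp [Real.pi_ne_zero, Complex.I_ne_zero]
      field_simp at hc
      have : (a : ℂ) = (N : ℂ) * (c : ℂ) := by
        apply mul_left_cancel₀ h2
        linear_combination (2 * (Real.pi : ℂ) * Complex.I) * hc
      exact_mod_cast this
    rw [geom_sum_eq hζ1, hζN, sub_self, zero_div]

lemma aux_cases (N q d k m : ℕ) (hN : 0 < N) (hd : q * d = N) (hk1 : 1 ≤ k)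
    (hkq : k ≤ q) (hm : m < N) (hdvd : (N : ℤ) ∣ ((k : ℤ) * d - m)) :
    k * d = m ∨ k * d = N + m := by
  have hd0 : 0 < d := by
    rcases Nat.eq_zero_or_pos d with h | h
    · subst h; simp at hd; omega
    · exact h
  have hkd : k * d ≤ N := by
    calc k * d ≤ q * d := Nat.mul_le_mul_right d hkq
    _ = N := hd
  obtain ⟨c, hc⟩ := hdvd
  have hc1 : c ≤ 1 := by nlinarith [hc, hkd, hm, hN]
  have hc0 : 0 ≤ c := by nlinarith [hc, hd0, hk1, hm, hN]
  interval_cases c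
  · left
    have h0 : (k : ℤ) * d - m = 0 := by simpa using hc
    zify
    linarith
  · right
    have h0 : (k : ℤ) * d - m = N := by simpa using hc
    zify
    linarith

open scoped Classical in
theorem ramanujanSum_dft (N q : ℕ) (hN : 0 < N) (hq : q ∣ N) (hq0 : 0 < q)
    (m : ℕ) (hm : m < N) :
    ∑ n ∈ Finset.range N,
      ramanujanSum q (n : ℤ) *
        Complex.exp (-(2 * (Real.pi : ℂ) * Complex.I * (m : ℂ) * (n : ℂ) / (N : ℂ))) =
    if ∃ k : ℕ, Nat.gcd k q = 1 ∧ m * q = k * N then (N : ℂ) else 0 := by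
  obtain ⟨d, hd⟩ := hq
  have hd' : q * d = N := hd.symm
  have hd0 : 0 < d := by
    rcases Nat.eq_zero_or_pos d with h | h
    · subst h; simp at hd'; omega
    · exact h
  -- Step 1: swap sums and combine exponentials
  have step1 : ∑ n ∈ Finset.range N,
      ramanujanSum q (n : ℤ) *
        Complex.exp (-(2 * (Real.pi : ℂ) * Complex.I * (m : ℂ) * (n : ℂ) / (N : ℂ))) =
      ∑ k ∈ (Finset.Icc 1 q).filter (fun k => Nat.gcd k q = 1),
        ∑ n ∈ Finset.range N,
          Complex.exp (2 * (Real.pi : ℂ) * Complex.I * (((k : ℤ) * d - m : ℤ) : ℂ) * (n : ℂ) / (N : ℂ)) := by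
    unfold ramanujanSum
    simp_rw [Finset.sum_mul]
    rw [Finset.sum_comm]
    apply Finset.sum_congr rfl
    intro k hk
    apply Finset.sum_congr rfl
    intro n hn
    rw [← Complex.exp_add]
    congr 1
    have hq0' : (q : ℂ) ≠ 0 := Nat.cast_ne_zero.mpr hq0.ne'
    have hN0' : (N : ℂ) ≠ 0 := Nat.cast_ne_zero.mpr hN.ne'
    have hNc : (q : ℂ) * (d : ℂ) = (N : ℂ) := by exact_mod_cast congrArg (Nat.cast : ℕ → ℂ) hd'
    push_cast
    field_simp
    linear_combination (-((n : ℂ) * (k : ℂ))) * hNc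
  rw [step1]
  have step2 : ∀ k : ℕ, ∑ n ∈ Finset.range N,
      Complex.exp (2 * (Real.pi : ℂ) * Complex.I * (((k : ℤ) * d - m : ℤ) : ℂ) * (n : ℂ) / (N : ℂ))
      = if (N : ℤ) ∣ ((k : ℤ) * d - m) then (N : ℂ) else 0 := fun k => sum_exp_div N hN _
  simp_rw [step2]
  by_cases h : ∃ k : ℕ, Nat.gcd k q = 1 ∧ m * q = k * N
  · rw [if_pos h]
    obtain ⟨k₀, hk₀, hmq⟩ := h
    have hm0 : m = k₀ * d := by
      have h1 : m * q = (k₀ * d) * q := by rw [hmq, ← hd']; ring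
      exact Nat.eq_of_mul_eq_mul_right hq0 h1
    by_cases hk00 : k₀ = 0
    · subst hk00
      have hq1 : q = 1 := by simpa using hk₀
      subst hq1
      have hdN : d = N := by omega
      have hm' : m = 0 := by omega
      subst hm'
      have hfilter : (Finset.Icc 1 1).filter (fun k => Nat.gcd k 1 = 1) = {1} := by
        ext x
        constructor
        · intro hx
          simp only [Finset.mem_filter, Finset.mem_Icc] at hx
          simp only [Finset.mem_singleton]
          omega
        · intro hx
          simp only [Finset.mem_singleton] at hx
          subst hx
          simp [Finset.mem_filter, Finset.mem_Icc]
      rw [hfilter, Finset.sum_singleton, if_pos]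
      refine ⟨1, ?_⟩
      push_cast
      rw [hdN]
      ring
    · have hk01 : 1 ≤ k₀ := Nat.one_le_iff_ne_zero.mpr hk00
      have hk0q : k₀ ≤ q := by
        by_contra hcon
        push_neg at hcon
        have : q * d < k₀ * d := (Nat.mul_lt_mul_right hd0).mpr hcon
        omega
      have hmem : k₀ ∈ (Finset.Icc 1 q).filter (fun k => Nat.gcd k q = 1) := by
        simp [Finset.mem_filter, Finset.mem_Icc, hk01, hk0q, hk₀]
      rw [Finset.sum_eq_single_of_mem k₀ hmem]
      · rw [if_pos]
        refine ⟨0, ?_⟩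
        rw [hm0]
        push_cast
        ring
      · intro k hk hne
        simp only [Finset.mem_filter, Finset.mem_Icc] at hk
        obtain ⟨⟨hk1, hkq⟩, hkg⟩ := hk
        rw [if_neg]
        intro hdvd
        rcases aux_cases N q d k m hN hd' hk1 hkq hm hdvd with hc | hc
        · have : k * d = k₀ * d := by omega
          exact hne (Nat.eq_of_mul_eq_mul_right hd0 this)
        · have hkdle : k * d ≤ q * d := Nat.mul_le_mul_right d hkq
          have hmz : m = 0 := by omega
          rw [hmz] at hm0
          rcases Nat.mul_eq_zero.mp hm0.symm with h0 | h0
          · exact hk00 h0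
          · omega
  · rw [if_neg h]
    apply Finset.sum_eq_zero
    intro k hk
    simp only [Finset.mem_filter, Finset.mem_Icc] at hk
    obtain ⟨⟨hk1, hkq⟩, hkg⟩ := hk
    rw [if_neg]
    intro hdvd
    rcases aux_cases N q d k m hN hd' hk1 hkq hm hdvd with hc | hc
    · exact h ⟨k, hkg, by rw [← hd', ← hc]; ring⟩
    · have hkdle : k * d ≤ q * d := Nat.mul_le_mul_right d hkq
      have hmz : m = 0 := by omega
      have hkq' : k = q := by
        apply Nat.eq_of_mul_eq_mul_right hd0
        omega
      have hq1 : q = 1 := by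
        rw [hkq'] at hkg
        simpa using hkg
      exact h ⟨0, by simp [hq1], by simp [hmz]⟩
end

section
/- Let N = 2d with d odd, let q be an even divisor of N, and let n be any integer. Then c_{q/2}(n) = (−1)^n · c_q(n). -/
open Finset Complex

lemma negone_zpow_eq (n : ℤ) : ((-1 : ℂ)) ^ n = Complex.exp ((n : ℂ) * ((Real.pi : ℂ) * Complex.I)) := by
  rw [Complex.exp_int_mul, Complex.exp_pi_mul_I]

theorem ramanujanSum_half (N d q : ℕ) (hN : N = 2 * d) (hd : Odd d)
    (hq : q ∣ N) (hqeven : 2 ∣ q) (n : ℤ) :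
    ramanujanSum (q / 2) n = (-1 : ℂ) ^ n * ramanujanSum q n := by
  obtain ⟨m, rfl⟩ := hqeven
  have hdodd := Nat.odd_iff.mp hd
  have hd0 : d ≠ 0 := by omega
  have hmd : m ∣ d := by
    rcases hq with ⟨c, hc⟩
    refine ⟨c, ?_⟩
    have h2 : 2 * d = 2 * (m * c) := by rw [← hN, hc]; ring
    exact Nat.eq_of_mul_eq_mul_left (by norm_num) h2
  have hmodd : m % 2 = 1 := by
    by_contra h
    have h2m : 2 ∣ m := by omega
    have h2d : 2 ∣ d := h2m.trans hmd
    omega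
  have hm0 : m ≠ 0 := by omega
  have hmC : (m : ℂ) ≠ 0 := Nat.cast_ne_zero.mpr hm0
  have hq2 : 2 * m / 2 = m := by omega
  rw [hq2]
  unfold ramanujanSum
  rw [Finset.mul_sum]
  refine Finset.sum_nbij' (fun k => if m < 2 * k then 2 * k - m else 2 * k + m)
    (fun k => if k ≤ m then (k + m) / 2 else (k - m) / 2) ?_ ?_ ?_ ?_ ?_
  · intro k hk
    simp only [Finset.mem_filter, Finset.mem_Icc] at hk ⊢
    obtain ⟨⟨hk1, hk2⟩, hkg⟩ := hk
    have h2m : Nat.Coprime 2 m := Nat.coprime_two_left.mpr (Nat.odd_iff.mpr hmodd)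
    have h2k : Nat.Coprime (2 * k) m := Nat.Coprime.mul h2m hkg
    split_ifs with h
    · refine ⟨⟨by omega, by omega⟩, ?_⟩
      have hodd : Nat.Coprime (2 * k - m) 2 :=
        Nat.coprime_two_right.mpr (Nat.odd_iff.mpr (by omega))
      have hcm : Nat.Coprime (2 * k - m) m := by
        unfold Nat.Coprime
        rw [Nat.gcd_sub_self_left (by omega)]
        exact h2k
      exact Nat.Coprime.mul_right hodd hcm
    · refine ⟨⟨by omega, by omega⟩, ?_⟩
      have hodd : Nat.Coprime (2 * k + m) 2 :=
        Nat.coprime_two_right.mpr (Nat.odd_iff.mpr (by omega))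
      have hcm : Nat.Coprime (2 * k + m) m := by
        unfold Nat.Coprime
        rw [Nat.gcd_add_self_left]
        exact h2k
      exact Nat.Coprime.mul_right hodd hcm
  · intro a ha
    simp only [Finset.mem_filter, Finset.mem_Icc] at ha ⊢
    obtain ⟨⟨ha1, ha2⟩, hag⟩ := ha
    have hao : a % 2 = 1 := by
      have : Nat.Coprime a 2 := Nat.Coprime.coprime_dvd_right (dvd_mul_right 2 m) hag
      exact Nat.odd_iff.mp (Nat.coprime_two_right.mp this)
    have ham : Nat.Coprime a m := Nat.Coprime.coprime_dvd_right (dvd_mul_left m 2) hag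
    split_ifs with h
    · refine ⟨⟨by omega, by omega⟩, ?_⟩
      have h2 : Nat.Coprime (a + m) m := by
        unfold Nat.Coprime; rw [Nat.gcd_add_self_left]; exact ham
      have hdvd : (a + m) / 2 ∣ a + m := Nat.div_dvd_of_dvd (by omega)
      exact Nat.Coprime.coprime_dvd_left hdvd h2
    · refine ⟨⟨by omega, by omega⟩, ?_⟩
      have h2 : Nat.Coprime (a - m) m := by
        unfold Nat.Coprime; rw [Nat.gcd_sub_self_left (by omega)]; exact ham
      have hdvd : (a - m) / 2 ∣ a - m := Nat.div_dvd_of_dvd (by omega)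
      exact Nat.Coprime.coprime_dvd_left hdvd h2
  · intro k hk
    simp only [Finset.mem_filter, Finset.mem_Icc] at hk
    split_ifs <;> omega
  · intro a ha
    simp only [Finset.mem_filter, Finset.mem_Icc] at ha
    obtain ⟨⟨ha1, ha2⟩, hag⟩ := ha
    have hao : a % 2 = 1 := by
      have : Nat.Coprime a 2 := Nat.Coprime.coprime_dvd_right (dvd_mul_right 2 m) hag
      exact Nat.odd_iff.mp (Nat.coprime_two_right.mp this)
    split_ifs <;> omega
  · intro k hk
    simp only [Finset.mem_filter, Finset.mem_Icc] at hk
    obtain ⟨⟨hk1, hk2⟩, hkg⟩ := hk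
    split_ifs with h
    · rw [negone_zpow_eq, ← Complex.exp_add]
      congr 1
      push_cast [Nat.cast_sub (by omega : m ≤ 2 * k)]
      field_simp
      ring
    · rw [negone_zpow_eq, ← Complex.exp_add]
      have key : (n : ℂ) * ((Real.pi : ℂ) * Complex.I) +
          2 * (Real.pi : ℂ) * Complex.I * ((2 * k + m : ℕ) : ℂ) * (n : ℂ) / ((2 * m : ℕ) : ℂ) =
          2 * (Real.pi : ℂ) * Complex.I * (k : ℂ) * (n : ℂ) / (m : ℂ) +
          (n : ℂ) * (2 * (Real.pi : ℂ) * Complex.I) := by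
        push_cast
        field_simp
        ring
      rw [key, Complex.exp_add, Complex.exp_int_mul_two_pi_mul_I, mul_one]
end

section
/- Let q be a positive even integer such that q/2 is odd (i.e., q ≡ 2 mod 4). Then for every integer n, c_q(2n) = (−1)^n · c_q(n). -/
open Finset Complex

lemma exp_congr_mod (q : ℕ) (hq : 0 < q) (n a b : ℤ) (h : (q : ℤ) ∣ a - b) :
    Complex.exp (2 * (Real.pi : ℂ) * Complex.I * (a : ℂ) * (n : ℂ) / (q : ℂ)) =
      Complex.exp (2 * (Real.pi : ℂ) * Complex.I * (b : ℂ) * (n : ℂ) / (q : ℂ)) := by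
  obtain ⟨c, hc⟩ := h
  have hq' : (q : ℂ) ≠ 0 := Nat.cast_ne_zero.mpr hq.ne'
  have ha : (a : ℂ) = (b : ℂ) + (q : ℂ) * (c : ℂ) := by
    have : a = b + (q : ℤ) * c := by omega
    exact_mod_cast congrArg (Int.cast : ℤ → ℂ) this
  rw [ha, show 2 * (Real.pi : ℂ) * Complex.I * ((b : ℂ) + (q : ℂ) * (c : ℂ)) * (n : ℂ) / (q : ℂ)
      = 2 * (Real.pi : ℂ) * Complex.I * (b : ℂ) * (n : ℂ) / (q : ℂ)
        + ((c * n : ℤ) : ℂ) * (2 * (Real.pi : ℂ) * Complex.I) by push_cast; field_simp,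
    Complex.exp_add, Complex.exp_int_mul_two_pi_mul_I, mul_one]

lemma inj_aux (m k₁ k₂ : ℕ) (hm : Odd m) (hk₁ : Odd k₁) (hk₂ : Odd k₂)
    (h₁ : k₁ ≤ 2 * m) (hk₂pos : 1 ≤ k₂) (h₂ : k₂ ≤ k₁)
    (h : (2 * k₁ + m) % (2 * m) = (2 * k₂ + m) % (2 * m)) : k₁ = k₂ := by
  have hle : 2 * k₂ + m ≤ 2 * k₁ + m := by omega
  have hdvd : 2 * m ∣ (2 * k₁ + m) - (2 * k₂ + m) :=
    (Nat.modEq_iff_dvd' hle).mp h.symm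
  obtain ⟨c, hc⟩ := hdvd
  rw [show 2 * m * c = 2 * (m * c) from by ring] at hc
  have hkk : k₁ - k₂ = m * c := by omega
  have hce : Even c := by
    rcases Nat.even_or_odd c with hc' | hc'
    · exact hc'
    · exfalso
      have hoddmc : Odd (m * c) := hm.mul hc'
      obtain ⟨a, ha⟩ := hk₁
      obtain ⟨b, hb⟩ := hk₂
      obtain ⟨d, hd⟩ := hoddmc
      omega
  have hclt : c < 2 := by
    by_contra hge
    have : m * 2 ≤ m * c := Nat.mul_le_mul_left m (by omega)
    omega
  obtain ⟨e, he⟩ := hce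
  have : c = 0 := by omega
  subst this
  omega

theorem ramanujanSum_double_arg (q : ℕ) (hq : 0 < q) (heven : 2 ∣ q)
    (hodd : Odd (q / 2)) (n : ℤ) :
    ramanujanSum q (2 * n) = (-1 : ℂ) ^ n * ramanujanSum q n := by
  obtain ⟨m, rfl⟩ := heven
  rw [Nat.mul_div_cancel_left m (by norm_num)] at hodd
  have hmpos : 0 < m := by omega
  have hqpos : 0 < 2 * m := by omega
  have hq1 : 1 < 2 * m := by omega
  set s := (Finset.Icc 1 (2 * m)).filter (fun k => Nat.gcd k (2 * m) = 1) with hs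
  -- facts about members of s
  have hmem : ∀ k ∈ s, 1 ≤ k ∧ k ≤ 2 * m ∧ Nat.Coprime k (2 * m) := by
    intro k hk
    simp only [hs, mem_filter, mem_Icc] at hk
    exact ⟨hk.1.1, hk.1.2, hk.2⟩
  have hodd_of_mem : ∀ k ∈ s, Odd k := by
    intro k hk
    have h2 : Nat.Coprime k 2 := (Nat.Coprime.coprime_dvd_right ⟨m, rfl⟩ (hmem k hk).2.2)
    rcases Nat.even_or_odd k with he | ho
    · exfalso; obtain ⟨a, ha⟩ := he
      have : (2 : ℕ) ∣ Nat.gcd k 2 := Nat.dvd_gcd ⟨a, by omega⟩ dvd_rfl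
      rw [h2] at this; omega
    · exact ho
  have hcop_of_mem : ∀ k ∈ s, Nat.Coprime k m :=
    fun k hk => Nat.Coprime.coprime_dvd_right ⟨2, by ring⟩ (hmem k hk).2.2
  -- the map
  set σ : ℕ → ℕ := fun k => (2 * k + m) % (2 * m) with hσ
  have hcop_img : ∀ k ∈ s, Nat.Coprime (σ k) (2 * m) := by
    intro k hk
    have hcop2 : Nat.Coprime (2 * k + m) 2 := by
      obtain ⟨a, ha⟩ := hodd
      exact Nat.coprime_two_right.mpr ⟨k + a, by omega⟩
    have hcopm : Nat.Coprime (2 * k + m) m := by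
      have h2m : Nat.Coprime 2 m := Nat.coprime_two_left.mpr hodd
      have := (Nat.coprime_add_mul_left_left (2 * k) m 1).mpr
        (Nat.Coprime.mul h2m (hcop_of_mem k hk))
      simpa using this
    have : Nat.Coprime (2 * k + m) (2 * m) := Nat.Coprime.mul_right hcop2 hcopm
    have hrec : Nat.gcd (σ k) (2 * m) = Nat.gcd (2 * k + m) (2 * m) := by
      rw [hσ]
      conv_rhs => rw [Nat.gcd_comm, Nat.gcd_rec]
    exact hrec.trans this
  have hmaps : ∀ k ∈ s, σ k ∈ s := by
    intro k hk
    have hc := hcop_img k hk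
    have hlt : σ k < 2 * m := Nat.mod_lt _ hqpos
    have hpos : 1 ≤ σ k := by
      by_contra h
      have h0 : σ k = 0 := by omega
      unfold Nat.Coprime at hc
      rw [h0, Nat.gcd_zero_left] at hc
      omega
    simp only [hs, mem_filter, mem_Icc]
    exact ⟨⟨hpos, by omega⟩, hc⟩
  have hinj : ∀ k₁ ∈ s, ∀ k₂ ∈ s, σ k₁ = σ k₂ → k₁ = k₂ := by
    intro k₁ h₁ k₂ h₂ h
    rcases le_total k₂ k₁ with hle | hle
    · exact inj_aux m k₁ k₂ hodd (hodd_of_mem _ h₁) (hodd_of_mem _ h₂)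
        (hmem _ h₁).2.1 (hmem _ h₂).1 hle h
    · exact (inj_aux m k₂ k₁ hodd (hodd_of_mem _ h₂) (hodd_of_mem _ h₁)
        (hmem _ h₂).2.1 (hmem _ h₁).1 hle h.symm).symm
  -- term equality
  have hterm : ∀ k ∈ s,
      Complex.exp (2 * (Real.pi : ℂ) * Complex.I * (k : ℂ) * ((2 * n : ℤ) : ℂ) / ((2 * m : ℕ) : ℂ))
        = (-1 : ℂ) ^ n *
          Complex.exp (2 * (Real.pi : ℂ) * Complex.I * ((σ k : ℕ) : ℂ) * (n : ℂ) / ((2 * m : ℕ) : ℂ)) := by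
    intro k hk
    have hm0 : (m : ℂ) ≠ 0 := Nat.cast_ne_zero.mpr hmpos.ne'
    have hneg : ((-1 : ℂ)) ^ n =
        Complex.exp (2 * (Real.pi : ℂ) * Complex.I * ((m : ℤ) : ℂ) * (n : ℂ) / ((2 * m : ℕ) : ℂ)) := by
      have : 2 * (Real.pi : ℂ) * Complex.I * ((m : ℤ) : ℂ) * (n : ℂ) / ((2 * m : ℕ) : ℂ)
          = (n : ℂ) * ((Real.pi : ℂ) * Complex.I) := by
        push_cast; field_simp
      rw [this, Complex.exp_int_mul, Complex.exp_pi_mul_I]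
    rw [hneg, ← Complex.exp_add]
    have hsum : 2 * (Real.pi : ℂ) * Complex.I * ((m : ℤ) : ℂ) * (n : ℂ) / ((2 * m : ℕ) : ℂ)
        + 2 * (Real.pi : ℂ) * Complex.I * ((σ k : ℕ) : ℂ) * (n : ℂ) / ((2 * m : ℕ) : ℂ)
        = 2 * (Real.pi : ℂ) * Complex.I * (((m : ℤ) + (σ k : ℕ)) : ℂ) * (n : ℂ) / ((2 * m : ℕ) : ℂ) := by
      push_cast; ring
    rw [hsum]
    have hlhs : 2 * (Real.pi : ℂ) * Complex.I * (k : ℂ) * ((2 * n : ℤ) : ℂ) / ((2 * m : ℕ) : ℂ)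
        = 2 * (Real.pi : ℂ) * Complex.I * (((2 * k : ℤ)) : ℂ) * (n : ℂ) / ((2 * m : ℕ) : ℂ) := by
      push_cast; ring
    rw [hlhs]
    have hdiv : ((2 * m : ℕ) : ℤ) ∣ (2 * (k : ℤ)) - ((m : ℤ) + ((σ k : ℕ) : ℤ)) := by
      have hmd := Nat.mod_add_div (2 * k + m) (2 * m)
      refine ⟨((2 * k + m) / (2 * m) : ℕ) - 1, ?_⟩
      have hmd' : ((σ k : ℕ) : ℤ) + (2 * m : ℕ) * (((2 * k + m) / (2 * m) : ℕ) : ℤ)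
          = 2 * (k : ℤ) + (m : ℤ) := by exact_mod_cast hmd
      push_cast at hmd' ⊢
      linear_combination -hmd'
    have := exp_congr_mod (2 * m) hqpos n (2 * (k : ℤ)) ((m : ℤ) + ((σ k : ℕ) : ℤ)) hdiv
    push_cast at this ⊢
    rw [this]
  -- assemble
  unfold ramanujanSum
  rw [Finset.mul_sum]
  refine Finset.sum_bij (fun k _ => σ k) hmaps (fun a ha b hb h => hinj a ha b hb h) ?_ hterm
  intro b hb
  obtain ⟨a, ha, hab⟩ := Finset.surj_on_of_inj_on_of_card_le (fun k _ => σ k) hmaps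
    (fun a₁ a₂ h₁ h₂ h => hinj a₁ h₁ a₂ h₂ h) le_rfl b hb
  exact ⟨a, ha, hab.symm⟩
end

section
/- Let N = 2d with d odd, let q be a divisor of N, let m ∈ {1,…,N−1} with m = kN/q for some k coprime to q, and let n be any integer. Then c_q(N/2 + n)·e^{−2πim(N/2+n)/N} = c_q(n)·e^{−2πimn/N}. -/
open Finset Complex

theorem ramanujanSum_half_period_shift (N d q k m : ℕ) (hN : N = 2 * d)
    (hd : Odd d) (hq : q ∣ N) (hq0 : 0 < q) (hk : Nat.gcd k q = 1)
    (hm : m * q = k * N) (h1 : 1 ≤ m) (h2 : m ≤ N - 1) (n : ℤ) :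
    ramanujanSum q ((d : ℤ) + n) *
        Complex.exp (-(2 * (Real.pi : ℂ) * Complex.I * (m : ℂ) * ((d : ℂ) + (n : ℂ)) / (N : ℂ))) =
      ramanujanSum q n *
        Complex.exp (-(2 * (Real.pi : ℂ) * Complex.I * (m : ℂ) * (n : ℂ) / (N : ℂ))) := by
  have hN0 : 0 < N := by omega
  have hqC : (q : ℂ) ≠ 0 := Nat.cast_ne_zero.mpr hq0.ne'
  have hNC : (N : ℂ) ≠ 0 := Nat.cast_ne_zero.mpr hN0.ne'
  have hmC : (m : ℂ) * q = (k : ℂ) * N := by exact_mod_cast congrArg Nat.cast hm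
  unfold ramanujanSum
  rw [Finset.sum_mul, Finset.sum_mul]
  apply Finset.sum_congr rfl
  intro l hl
  simp only [Finset.mem_filter, Finset.mem_Icc] at hl
  obtain ⟨⟨hl1, hl2⟩, hlq⟩ := hl
  -- key divisibility: q ∣ d * (l - k) in ℤ
  have hdvd : (q : ℤ) ∣ (d : ℤ) * ((l : ℤ) - k) := by
    rcases Nat.even_or_odd q with hqe | hqo
    · -- q even: q = 2 q', q' ∣ d, l and k odd
      obtain ⟨q', hq'⟩ := hqe
      have hq2 : q = 2 * q' := by omega
      have h2q : 2 * q' ∣ 2 * d := by rw [← hq2, ← hN]; exact hq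
      have hq'd : q' ∣ d := (Nat.mul_dvd_mul_iff_left (by norm_num : 0 < 2)).mp h2q
      have hlodd : Odd l := by
        rcases Nat.even_or_odd l with he | ho
        · exfalso
          obtain ⟨a, ha⟩ := he
          have : 2 ∣ Nat.gcd l q := Nat.dvd_gcd ⟨a, by omega⟩ ⟨q', hq2⟩
          omega
        · exact ho
      have hkodd : Odd k := by
        rcases Nat.even_or_odd k with he | ho
        · exfalso
          obtain ⟨a, ha⟩ := he
          have : 2 ∣ Nat.gcd k q := Nat.dvd_gcd ⟨a, by omega⟩ ⟨q', hq2⟩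
          omega
        · exact ho
      obtain ⟨a, ha⟩ := hq'd
      obtain ⟨s, hs⟩ := hlodd
      obtain ⟨t, ht⟩ := hkodd
      have hlk : (l : ℤ) - k = 2 * ((s : ℤ) - t) := by
        have h1' : (l : ℤ) = 2 * s + 1 := by exact_mod_cast congrArg Nat.cast hs
        have h2' : (k : ℤ) = 2 * t + 1 := by exact_mod_cast congrArg Nat.cast ht
        omega
      have hdZ : (d : ℤ) = q' * a := by exact_mod_cast congrArg Nat.cast ha
      have hqZ : (q : ℤ) = 2 * q' := by exact_mod_cast congrArg Nat.cast hq2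
      exact ⟨a * ((s : ℤ) - t), by rw [hdZ, hlk, hqZ]; ring⟩
    · -- q odd: q ∣ d
      obtain ⟨t, ht⟩ := hqo
      have hco : Nat.Coprime 2 q := (Nat.prime_two.coprime_iff_not_dvd).mpr (by omega)
      have hqd : q ∣ d := hco.symm.dvd_of_dvd_mul_left (by rwa [hN] at hq)
      exact Dvd.dvd.mul_right (Int.natCast_dvd_natCast.mpr hqd) _
  obtain ⟨j, hj⟩ := hdvd
  have hjC : (d : ℂ) * ((l : ℂ) - k) = (q : ℂ) * j := by
    exact_mod_cast congrArg (Int.cast : ℤ → ℂ) hj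
  rw [← Complex.exp_add, ← Complex.exp_add, Complex.exp_eq_exp_iff_exists_int]
  refine ⟨j, ?_⟩
  push_cast
  field_simp
  ring_nf
  linear_combination ((N : ℂ)) * hjC -
    ((d : ℂ)) * hmC
end

section
/- Let N = 2d with d odd, and let q, q' be divisors of N with q' ∉ {q, q/2, 2q}. Then for any integer k coprime to q and any n ∈ {0,1}, Σ_{ℓ=0}^{d−1} c_{q'}(2ℓ+n)·e^{−2πi(2ℓ)k/q} = 0. -/
open Finset Complex

lemma keyNT (q q' j k : ℕ) (hq : 0 < q) (hq' : 0 < q')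
    (hk : Nat.gcd k q = 1) (hj : Nat.gcd j q' = 1)
    (h1 : q' ≠ q) (h2 : 2 * q' ≠ q) (h3 : q' ≠ 2 * q) :
    ¬ ((q * q' : ℤ) ∣ 2 * ((j : ℤ) * q - (k : ℤ) * q')) := by
  intro H
  set g := Nat.gcd q q' with hg
  have hg0 : 0 < g := Nat.gcd_pos_of_pos_left _ hq
  set a := q / g with ha
  set b := q' / g with hb
  have hqa : q = g * a := (Nat.mul_div_cancel' (Nat.gcd_dvd_left q q')).symm
  have hqb : q' = g * b := (Nat.mul_div_cancel' (Nat.gcd_dvd_right q q')).symm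
  have hab : Nat.Coprime a b := Nat.coprime_div_gcd_div_gcd hg0
  have ha0 : 0 < a := by
    rcases Nat.eq_zero_or_pos a with h | h
    · rw [h, Nat.mul_zero] at hqa; omega
    · exact h
  have hb0 : 0 < b := by
    rcases Nat.eq_zero_or_pos b with h | h
    · rw [h, Nat.mul_zero] at hqb; omega
    · exact h
  obtain ⟨c, hc⟩ := H
  rw [hqa, hqb] at hc
  push_cast at hc
  have hgz : (g : ℤ) ≠ 0 := by exact_mod_cast hg0.ne'
  have H' : ((a : ℤ) * b * g) ∣ 2 * ((j : ℤ) * a - (k : ℤ) * b) := by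
    refine ⟨c, ?_⟩
    have heq : (g : ℤ) * (2 * ((j : ℤ) * a - (k : ℤ) * b)) = (g : ℤ) * ((a : ℤ) * b * g * c) := by
      linear_combination hc
    exact mul_left_cancel₀ hgz heq
  -- a divides 2*k*b
  have d1 : (a : ℤ) ∣ 2 * ((j : ℤ) * a - (k : ℤ) * b) :=
    dvd_trans ⟨(b : ℤ) * g, by ring⟩ H'
  have d1' : (a : ℤ) ∣ (j : ℤ) * a * 2 := ⟨(j : ℤ) * 2, by ring⟩
  have d2 : (a : ℤ) ∣ (k : ℤ) * b * 2 := by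
    have hsub := dvd_sub d1' d1
    rw [show (j : ℤ) * a * 2 - 2 * ((j : ℤ) * a - (k : ℤ) * b) = (k : ℤ) * b * 2 by ring] at hsub
    exact hsub
  have d2n : a ∣ k * b * 2 := by exact_mod_cast d2
  -- b divides 2*j*a
  have e1 : (b : ℤ) ∣ 2 * ((j : ℤ) * a - (k : ℤ) * b) :=
    dvd_trans ⟨(a : ℤ) * g, by ring⟩ H'
  have e1' : (b : ℤ) ∣ (k : ℤ) * b * 2 := ⟨(k : ℤ) * 2, by ring⟩
  have e2 : (b : ℤ) ∣ (j : ℤ) * a * 2 := by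
    have hsub := dvd_add e1 e1'
    rw [show 2 * ((j : ℤ) * a - (k : ℤ) * b) + (k : ℤ) * b * 2 = (j : ℤ) * a * 2 by ring] at hsub
    exact hsub
  have e2n : b ∣ j * a * 2 := by exact_mod_cast e2
  -- coprimality
  have hadvdq : a ∣ q := ⟨g, by rw [hqa, Nat.mul_comm]⟩
  have hbdvdq' : b ∣ q' := ⟨g, by rw [hqb, Nat.mul_comm]⟩
  have hak : Nat.Coprime a k :=
    Nat.Coprime.coprime_dvd_left hadvdq (Nat.coprime_comm.mp hk)
  have hbj : Nat.Coprime b j :=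
    Nat.Coprime.coprime_dvd_left hbdvdq' (Nat.coprime_comm.mp hj)
  have hakb : Nat.Coprime a (k * b) := Nat.Coprime.mul_right hak hab
  have hbja : Nat.Coprime b (j * a) := Nat.Coprime.mul_right hbj (Nat.coprime_comm.mp hab)
  have ha2 : a ∣ 2 := hakb.dvd_of_dvd_mul_left d2n
  have hb2 : b ∣ 2 := hbja.dvd_of_dvd_mul_left e2n
  have ha12 : a = 1 ∨ a = 2 := (Nat.dvd_prime Nat.prime_two).mp ha2
  have hb12 : b = 1 ∨ b = 2 := (Nat.dvd_prime Nat.prime_two).mp hb2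
  rcases ha12 with h | h <;> rcases hb12 with h' | h'
  · rw [h] at hqa; rw [h'] at hqb; omega
  · rw [h] at hqa; rw [h'] at hqb; omega
  · rw [h] at hqa; rw [h'] at hqb; omega
  · rw [h, h'] at hab; simp [Nat.Coprime] at hab

theorem zak_vanishing (N d q q' k : ℕ) (hN : N = 2 * d) (hd : Odd d)
    (hq : q ∣ N) (hq' : q' ∣ N) (hq0 : 0 < q)
    (h1 : q' ≠ q) (h2 : 2 * q' ≠ q) (h3 : q' ≠ 2 * q)
    (hk : Nat.gcd k q = 1) (n : ℕ) (hn : n = 0 ∨ n = 1) :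
    ∑ ℓ ∈ Finset.range d,
      ramanujanSum q' ((2 * ℓ + n : ℕ) : ℤ) *
        Complex.exp (-(2 * (Real.pi : ℂ) * Complex.I * ((2 * ℓ : ℕ) : ℂ) * (k : ℂ) / (q : ℂ))) = 0 := by
  have hd0 : 0 < d := hd.pos
  have hN0 : 0 < N := by omega
  have hq'0 : 0 < q' := Nat.pos_of_dvd_of_pos hq' hN0
  obtain ⟨s, hs⟩ := hq
  obtain ⟨t, ht⟩ := hq'
  have hqc : (q : ℂ) ≠ 0 := by exact_mod_cast hq0.ne'
  have hq'c : (q' : ℂ) ≠ 0 := by exact_mod_cast hq'0.ne'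
  have hπ : (Real.pi : ℂ) ≠ 0 := by exact_mod_cast Real.pi_ne_zero
  have h2πI : (2 * (Real.pi : ℂ) * Complex.I) ≠ 0 := by
    simp [hπ, Complex.I_ne_zero]
  unfold ramanujanSum
  simp_rw [Finset.sum_mul]
  rw [Finset.sum_comm]
  apply Finset.sum_eq_zero
  intro j hjmem
  have hj1 : Nat.gcd j q' = 1 := (Finset.mem_filter.mp hjmem).2
  set z : ℂ := Complex.exp (2 * (Real.pi : ℂ) * Complex.I * (2 * ((j : ℂ) * q - (k : ℂ) * q')) / ((q : ℂ) * q')) with hz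
  have hterm : ∀ ℓ ∈ Finset.range d,
      Complex.exp (2 * (Real.pi : ℂ) * Complex.I * (j : ℂ) * (((2 * ℓ + n : ℕ) : ℤ) : ℂ) / (q' : ℂ)) *
        Complex.exp (-(2 * (Real.pi : ℂ) * Complex.I * ((2 * ℓ : ℕ) : ℂ) * (k : ℂ) / (q : ℂ)))
      = Complex.exp (2 * (Real.pi : ℂ) * Complex.I * (j : ℂ) * (n : ℂ) / (q' : ℂ)) * z ^ ℓ := by
    intro ℓ _
    rw [hz, ← Complex.exp_nat_mul, ← Complex.exp_add, ← Complex.exp_add]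
    congr 1
    push_cast
    field_simp
    ring
  rw [Finset.sum_congr rfl hterm, ← Finset.mul_sum]
  have hzd : z ^ d = 1 := by
    rw [hz, ← Complex.exp_nat_mul]
    have key : (d : ℂ) * (2 * ((j : ℂ) * q - (k : ℂ) * q')) = ((j : ℂ) * t - (k : ℂ) * s) * ((q : ℂ) * q') := by
      have hsC : (2 * (d : ℂ)) = (q : ℂ) * s := by exact_mod_cast (hN ▸ hs : 2 * d = q * s)
      have htC : (2 * (d : ℂ)) = (q' : ℂ) * t := by exact_mod_cast (hN ▸ ht : 2 * d = q' * t)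
      linear_combination (j : ℂ) * (q : ℂ) * htC - (k : ℂ) * (q' : ℂ) * hsC
    have e1 : (d : ℂ) * (2 * (Real.pi : ℂ) * Complex.I * (2 * ((j : ℂ) * q - (k : ℂ) * q')) / ((q : ℂ) * q'))
        = (((j : ℤ) * t - (k : ℤ) * s : ℤ) : ℂ) * (2 * (Real.pi : ℂ) * Complex.I) := by
      push_cast
      field_simp
      linear_combination key
    rw [e1, Complex.exp_int_mul_two_pi_mul_I]
  have hzne : z ≠ 1 := by
    intro hzeq
    rw [hz, Complex.exp_eq_one_iff] at hzeq
    obtain ⟨m, hm⟩ := hzeq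
    have hA := congrArg (fun y => y * ((q : ℂ) * q')) hm
    rw [div_mul_cancel₀ _ (mul_ne_zero hqc hq'c)] at hA
    have hm' : (2 * (Real.pi : ℂ) * Complex.I) * (2 * ((j : ℂ) * q - (k : ℂ) * q'))
        = (2 * (Real.pi : ℂ) * Complex.I) * ((m : ℂ) * ((q : ℂ) * q')) := by
      linear_combination hA
    have hcan := mul_left_cancel₀ h2πI hm'
    have hZ : 2 * ((j : ℤ) * q - (k : ℤ) * q') = m * ((q : ℤ) * q') := by exact_mod_cast hcan
    exact keyNT q q' j k hq0 hq'0 hk hj1 h1 h2 h3 ⟨m, by linarith [hZ]⟩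
  rw [geom_sum_eq hzne, hzd]
  simp
end

section
/- Let N = 2d with d odd, let q be an even divisor of N, let k be coprime to q, and let n ∈ {0,1}. Then Σ_{ℓ=0}^{d−1} c_{q/2}(2ℓ+n)·e^{−2πi(2ℓ+n)k/q} = (−1)^n · N/2. -/
open Finset Complex

lemma geom_helper (d : ℕ) (z : ℂ) (hz : z ^ d = 1) :
    ∑ ℓ ∈ Finset.range d, z ^ ℓ = if z = 1 then (d : ℂ) else 0 := by
  split_ifs with h
  · simp [h]
  · rw [geom_sum_eq h, hz]; simp

lemma two_pi_I_ne_zero' : (2 : ℂ) * (Real.pi : ℂ) * Complex.I ≠ 0 :=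
  mul_ne_zero (mul_ne_zero two_ne_zero (Complex.ofReal_ne_zero.mpr Real.pi_ne_zero))
    Complex.I_ne_zero

lemma exp_div_eq_one_iff (m : ℕ) (hm : 0 < m) (a : ℤ) :
    Complex.exp (2 * (Real.pi : ℂ) * Complex.I * (a : ℂ) / (m : ℂ)) = 1 ↔ (m : ℤ) ∣ a := by
  have hm' : (m : ℂ) ≠ 0 := Nat.cast_ne_zero.mpr hm.ne'
  rw [Complex.exp_eq_one_iff]
  constructor
  · rintro ⟨c, hc⟩
    rw [div_eq_iff hm'] at hc
    have h2 : (2 * (Real.pi : ℂ) * Complex.I) * (a : ℂ)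
        = (2 * (Real.pi : ℂ) * Complex.I) * ((c : ℂ) * m) := by linear_combination hc
    have h3 := mul_left_cancel₀ two_pi_I_ne_zero' h2
    have h4 : (a : ℂ) = ((m : ℂ)) * (c : ℂ) := by linear_combination h3
    exact ⟨c, by exact_mod_cast h4⟩
  · rintro ⟨c, rfl⟩
    refine ⟨c, ?_⟩
    push_cast
    field_simp

lemma exists_unique_j (q' k : ℕ) (hq'0 : 0 < q') (hq'odd : Odd q')
    (hk : Nat.gcd k q' = 1) :
    ∃! j, (j ∈ (Finset.Icc 1 q').filter (fun j => Nat.gcd j q' = 1) ∧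
      (q' : ℤ) ∣ 2 * (j : ℤ) - (k : ℤ)) := by
  haveI : NeZero q' := ⟨hq'0.ne'⟩
  have key : ∀ j : ℕ, ((q' : ℤ) ∣ 2 * (j : ℤ) - (k : ℤ)) ↔
      (2 : ZMod q') * (j : ZMod q') = (k : ZMod q') := by
    intro j
    rw [← ZMod.intCast_zmod_eq_zero_iff_dvd]
    push_cast
    rw [sub_eq_zero]
  have htwo : IsUnit (2 : ZMod q') := by
    have h2 : Nat.Coprime 2 q' := Nat.coprime_two_left.mpr hq'odd
    have := (ZMod.isUnit_iff_coprime 2 q').mpr h2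
    simpa using this
  have hku : IsUnit ((k : ℕ) : ZMod q') := (ZMod.isUnit_iff_coprime k q').mpr hk
  set x : ZMod q' := (2 : ZMod q')⁻¹ * (k : ZMod q') with hxdef
  have h2x : (2 : ZMod q') * x = (k : ZMod q') := by
    rw [hxdef, ← mul_assoc, ZMod.mul_inv_of_unit _ htwo, one_mul]
  have hxu : IsUnit x := by
    have h2 : IsUnit ((2 : ZMod q') * x) := by rw [h2x]; exact hku
    exact isUnit_of_mul_isUnit_right h2
  by_cases hq1 : q' = 1
  · subst hq1
    refine ⟨1, ⟨?_, one_dvd _⟩, ?_⟩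
    · simp
    · rintro j ⟨hj, -⟩
      simp only [Finset.mem_filter, Finset.mem_Icc] at hj
      omega
  · haveI : Fact (1 < q') := ⟨by omega⟩
    have hx0 : x ≠ 0 := hxu.ne_zero
    have hval : x.val ≠ 0 := by
      intro h
      exact hx0 (by rwa [← ZMod.val_eq_zero])
    have hcastval : ((x.val : ℕ) : ZMod q') = x := by
      rw [ZMod.natCast_val, ZMod.cast_id]
    refine ⟨x.val, ⟨?_, ?_⟩, ?_⟩
    · simp only [Finset.mem_filter, Finset.mem_Icc]
      refine ⟨⟨by omega, (ZMod.val_lt x).le⟩, ?_⟩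
      have : IsUnit ((x.val : ℕ) : ZMod q') := by rw [hcastval]; exact hxu
      exact (ZMod.isUnit_iff_coprime _ _).mp this
    · rw [key, hcastval]
      exact h2x
    · rintro j ⟨hjmem, hjdvd⟩
      rw [key] at hjdvd
      have hjx : (j : ZMod q') = x := htwo.mul_left_cancel (hjdvd.trans h2x.symm)
      have hj' : (j : ZMod q') = ((x.val : ℕ) : ZMod q') := by rw [hcastval]; exact hjx
      have hmod := (ZMod.natCast_eq_natCast_iff j x.val q').mp hj'
      simp only [Finset.mem_filter, Finset.mem_Icc] at hjmem
      have h1 : x.val < q' := ZMod.val_lt x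
      have hxm : x.val % q' = x.val := Nat.mod_eq_of_lt h1
      unfold Nat.ModEq at hmod
      rcases eq_or_lt_of_le hjmem.1.2 with hjq | hjq
      · exfalso
        rw [hjq, Nat.mod_self, hxm] at hmod
        omega
      · rw [Nat.mod_eq_of_lt hjq, hxm] at hmod
        exact hmod

theorem zak_half_value (N d q k : ℕ) (hN : N = 2 * d) (hd : Odd d)
    (hq : q ∣ N) (hqeven : 2 ∣ q) (hq0 : 0 < q)
    (hk : Nat.gcd k q = 1) (n : ℕ) (hn : n = 0 ∨ n = 1) :
    ∑ ℓ ∈ Finset.range d,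
      ramanujanSum (q / 2) ((2 * ℓ + n : ℕ) : ℤ) *
        Complex.exp (-(2 * (Real.pi : ℂ) * Complex.I * ((2 * ℓ + n : ℕ) : ℂ) * (k : ℂ) / (q : ℂ))) =
      (-1 : ℂ) ^ n * (N : ℂ) / 2 := by
  obtain ⟨q', rfl⟩ := hqeven
  subst hN
  have hq'0 : 0 < q' := by omega
  have hq'ne : (q' : ℂ) ≠ 0 := Nat.cast_ne_zero.mpr hq'0.ne'
  have hq'd : q' ∣ d := by
    obtain ⟨c, hc⟩ := hq
    rw [mul_assoc] at hc
    exact ⟨c, by omega⟩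
  obtain ⟨t, ht⟩ := hq'd
  have hq'odd : Odd q' := by
    rcases Nat.even_or_odd q' with h | h
    · exfalso
      have h2 : 2 ∣ d := dvd_trans h.two_dvd ⟨t, ht⟩
      obtain ⟨u, hu⟩ := h2
      obtain ⟨s2, hs2⟩ := hd
      omega
    · exact h
  have hkodd : Odd k := by
    rcases Nat.even_or_odd k with h | h
    · exfalso
      have h2 : (2 : ℕ) ∣ Nat.gcd k (2 * q') := Nat.dvd_gcd h.two_dvd ⟨q', rfl⟩
      omega
    · exact h
  have hkq' : Nat.gcd k q' = 1 :=
    Nat.Coprime.coprime_dvd_right (dvd_mul_left q' 2) hk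
  have hdiv : 2 * q' / 2 = q' := by omega
  rw [hdiv]
  set F := (Finset.Icc 1 q').filter (fun j => Nat.gcd j q' = 1) with hF
  have stepA : ∀ ℓ : ℕ, ramanujanSum q' ((2 * ℓ + n : ℕ) : ℤ) *
      Complex.exp (-(2 * (Real.pi : ℂ) * Complex.I * ((2 * ℓ + n : ℕ) : ℂ) * (k : ℂ) /
        ((2 * q' : ℕ) : ℂ))) =
      ∑ j ∈ F, Complex.exp (2 * (Real.pi : ℂ) * Complex.I * ((2 * ℓ + n : ℕ) : ℂ) *
        (2 * (j : ℂ) - (k : ℂ)) / ((2 * q' : ℕ) : ℂ)) := by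
    intro ℓ
    rw [ramanujanSum, Finset.sum_mul]
    refine Finset.sum_congr rfl fun j hj => ?_
    rw [← Complex.exp_add]
    congr 1
    push_cast
    field_simp
    ring
  have stepC : ∀ j ∈ F,
      (∑ ℓ ∈ Finset.range d, Complex.exp (2 * (Real.pi : ℂ) * Complex.I *
        ((2 * ℓ + n : ℕ) : ℂ) * (2 * (j : ℂ) - (k : ℂ)) / ((2 * q' : ℕ) : ℂ))) =
      if (q' : ℤ) ∣ 2 * (j : ℤ) - (k : ℤ) then
        Complex.exp (2 * (Real.pi : ℂ) * Complex.I * (n : ℂ) * (2 * (j : ℂ) - (k : ℂ)) /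
          ((2 * q' : ℕ) : ℂ)) * (d : ℂ)
      else 0 := by
    intro j _
    have hsplit : ∀ ℓ : ℕ, Complex.exp (2 * (Real.pi : ℂ) * Complex.I *
        ((2 * ℓ + n : ℕ) : ℂ) * (2 * (j : ℂ) - (k : ℂ)) / ((2 * q' : ℕ) : ℂ)) =
        Complex.exp (2 * (Real.pi : ℂ) * Complex.I * (n : ℂ) * (2 * (j : ℂ) - (k : ℂ)) /
          ((2 * q' : ℕ) : ℂ)) *
        (Complex.exp (2 * (Real.pi : ℂ) * Complex.I * ((2 * (j : ℤ) - (k : ℤ) : ℤ) : ℂ) /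
          (q' : ℂ))) ^ ℓ := by
      intro ℓ
      rw [← Complex.exp_nat_mul, ← Complex.exp_add]
      congr 1
      push_cast
      field_simp
      ring
    have hzd : (Complex.exp (2 * (Real.pi : ℂ) * Complex.I * ((2 * (j : ℤ) - (k : ℤ) : ℤ) : ℂ) /
        (q' : ℂ))) ^ d = 1 := by
      rw [← Complex.exp_nat_mul]
      rw [show (d : ℂ) * (2 * (Real.pi : ℂ) * Complex.I * ((2 * (j : ℤ) - (k : ℤ) : ℤ) : ℂ) /
          (q' : ℂ)) = (((2 * (j : ℤ) - (k : ℤ)) * (t : ℤ) : ℤ) : ℂ) *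
          (2 * (Real.pi : ℂ) * Complex.I) from by
        push_cast [ht]
        field_simp]
      exact Complex.exp_int_mul_two_pi_mul_I _
    simp only [hsplit]
    rw [← Finset.mul_sum, geom_helper d _ hzd]
    simp only [exp_div_eq_one_iff q' hq'0, mul_ite, mul_zero]
  have hEU := exists_unique_j q' k hq'0 hq'odd hkq'
  obtain ⟨j₀, ⟨hj₀F, hj₀dvd⟩, huniq⟩ := hEU
  calc
    ∑ ℓ ∈ Finset.range d, ramanujanSum q' ((2 * ℓ + n : ℕ) : ℤ) *
        Complex.exp (-(2 * (Real.pi : ℂ) * Complex.I * ((2 * ℓ + n : ℕ) : ℂ) * (k : ℂ) /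
          ((2 * q' : ℕ) : ℂ)))
      = ∑ ℓ ∈ Finset.range d, ∑ j ∈ F, Complex.exp (2 * (Real.pi : ℂ) * Complex.I *
          ((2 * ℓ + n : ℕ) : ℂ) * (2 * (j : ℂ) - (k : ℂ)) / ((2 * q' : ℕ) : ℂ)) :=
        Finset.sum_congr rfl fun ℓ _ => stepA ℓ
    _ = ∑ j ∈ F, ∑ ℓ ∈ Finset.range d, Complex.exp (2 * (Real.pi : ℂ) * Complex.I *
          ((2 * ℓ + n : ℕ) : ℂ) * (2 * (j : ℂ) - (k : ℂ)) / ((2 * q' : ℕ) : ℂ)) :=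
        Finset.sum_comm
    _ = ∑ j ∈ F, (if (q' : ℤ) ∣ 2 * (j : ℤ) - (k : ℤ) then
          Complex.exp (2 * (Real.pi : ℂ) * Complex.I * (n : ℂ) * (2 * (j : ℂ) - (k : ℂ)) /
            ((2 * q' : ℕ) : ℂ)) * (d : ℂ) else 0) :=
        Finset.sum_congr rfl stepC
    _ = Complex.exp (2 * (Real.pi : ℂ) * Complex.I * (n : ℂ) * (2 * (j₀ : ℂ) - (k : ℂ)) /
          ((2 * q' : ℕ) : ℂ)) * (d : ℂ) := by
        rw [Finset.sum_eq_single_of_mem j₀ hj₀F]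
        · rw [if_pos hj₀dvd]
        · intro j hjF hne
          rw [if_neg]
          intro hdvd
          exact hne (huniq j ⟨hjF, hdvd⟩)
    _ = (-1 : ℂ) ^ n * ((2 * d : ℕ) : ℂ) / 2 := by
        obtain ⟨m, hm⟩ := hj₀dvd
        have hmodd : Odd m := by
          have h1 : Odd (2 * (j₀ : ℤ) - (k : ℤ)) := by
            refine Even.sub_odd ⟨(j₀ : ℤ), by ring⟩ ?_
            obtain ⟨s, hs⟩ := hkodd
            exact ⟨(s : ℤ), by push_cast [hs]; ring⟩
          rw [hm] at h1
          exact (Int.odd_mul.mp h1).2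
        have h1 : (2 * (j₀ : ℂ) - (k : ℂ)) = (q' : ℂ) * (m : ℂ) := by
          have := congrArg (fun z : ℤ => (z : ℂ)) hm
          push_cast at this
          linear_combination this
        have key : 2 * (Real.pi : ℂ) * Complex.I * (n : ℂ) * (2 * (j₀ : ℂ) - (k : ℂ)) /
            ((2 * q' : ℕ) : ℂ) = (((n : ℤ) * m : ℤ) : ℂ) * ((Real.pi : ℂ) * Complex.I) := by
          rw [h1]
          push_cast
          field_simp
        rw [key, Complex.exp_int_mul, Complex.exp_pi_mul_I]
        rcases hn with rfl | rfl
        · push_cast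
          simp
        · simp only [Nat.cast_one, one_mul, pow_one]
          rw [Odd.neg_one_zpow hmodd]
          push_cast
          try ring
end

section
/- (Tight frame R_{1,N}) Let N ≥ 1 and let q_1, …, q_K be all divisors of N. For x ∈ ℓ²(Z_N) and m ∈ Z_N, let L_m x denote the circular shift (L_m x)(n) = x(n−m mod N). Then the collection {L_k c_{q_i} : 0 ≤ k ≤ N−1, 1 ≤ i ≤ K} is a tight frame for ℓ²(Z_N) with bound N²; that is, for all x ∈ ℝ^N (or ℂ^N), Σ_{i=1}^{K} Σ_{k=0}^{N−1} |⟨x, L_k c_{q_i}⟩|² = N²·‖x‖². -/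
open Finset Complex

noncomputable def eN (N : ℕ) (m : ℤ) : ℂ :=
  Complex.exp (2 * (Real.pi : ℂ) * Complex.I * (m : ℂ) / (N : ℂ))

lemma eN_pow (N : ℕ) (m : ℤ) (j : ℕ) : eN N m ^ j = eN N (j * m) := by
  rw [eN, eN, ← Complex.exp_nat_mul]
  congr 1
  push_cast
  ring

lemma eN_add (N : ℕ) (a b : ℤ) : eN N (a + b) = eN N a * eN N b := by
  rw [eN, eN, eN, ← Complex.exp_add]
  congr 1
  push_cast
  ring

lemma eN_conj (N : ℕ) (m : ℤ) : (starRingEnd ℂ) (eN N m) = eN N (-m) := by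
  rw [eN, eN, ← Complex.exp_conj]
  congr 1
  simp only [map_div₀, map_mul, map_ofNat, Complex.conj_I, Complex.conj_ofReal,
    map_intCast, map_natCast]
  push_cast
  ring

lemma eN_dvd (N : ℕ) (hN : 0 < N) {m : ℤ} (h : (N : ℤ) ∣ m) : eN N m = 1 := by
  obtain ⟨c, rfl⟩ := h
  rw [eN]
  have hN' : (N : ℂ) ≠ 0 := by exact_mod_cast hN.ne'
  have : 2 * (Real.pi : ℂ) * Complex.I * (((N : ℤ) * c : ℤ) : ℂ) / (N : ℂ)
      = (c : ℂ) * (2 * (Real.pi : ℂ) * Complex.I) := by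
    push_cast
    field_simp
  rw [this, Complex.exp_int_mul_two_pi_mul_I]

lemma eN_ne_one (N : ℕ) (hN : 0 < N) {m : ℤ} (h : ¬ (N : ℤ) ∣ m) : eN N m ≠ 1 := by
  intro hcon
  rw [eN, Complex.exp_eq_one_iff] at hcon
  obtain ⟨n, hn⟩ := hcon
  have hN' : (N : ℂ) ≠ 0 := by exact_mod_cast hN.ne'
  have hpi : (2 * (Real.pi : ℂ) * Complex.I) ≠ 0 := by
    simp [Real.pi_ne_zero, Complex.I_ne_zero, Complex.ofReal_ne_zero]
  have hm : (m : ℂ) = (n : ℂ) * (N : ℂ) := by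
    field_simp at hn
    have := hn
    -- hn : 2 * π * I * m = n * (2 * π * I) * N
    have h2 : (2 * (Real.pi : ℂ) * Complex.I) * (m : ℂ)
        = (2 * (Real.pi : ℂ) * Complex.I) * ((n : ℂ) * (N : ℂ)) := by
      linear_combination (2 * (Real.pi : ℂ) * Complex.I) * hn
    exact mul_left_cancel₀ hpi h2
  apply h
  refine ⟨n, ?_⟩
  have : (m : ℂ) = ((N : ℤ) : ℂ) * ((n : ℤ) : ℂ) := by rw [hm]; push_cast; ring
  exact_mod_cast this

lemma orth_range (N : ℕ) (hN : 0 < N) (m : ℤ) :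
    ∑ k ∈ Finset.range N, eN N (m * k) = if (N : ℤ) ∣ m then (N : ℂ) else 0 := by
  by_cases h : (N : ℤ) ∣ m
  · simp only [h, if_true]
    have : ∀ k ∈ Finset.range N, eN N (m * k) = 1 := by
      intro k _
      exact eN_dvd N hN (Dvd.dvd.mul_right h _)
    rw [Finset.sum_congr rfl this]
    simp
  · simp only [h, if_false]
    have hne : eN N m ≠ 1 := eN_ne_one N hN h
    have : ∀ k ∈ Finset.range N, eN N (m * k) = eN N m ^ k := by
      intro k _
      rw [eN_pow]
      congr 1
      ring
    rw [Finset.sum_congr rfl this, geom_sum_eq hne, eN_pow, eN_dvd N hN ⟨m, rfl⟩,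
      sub_self, zero_div]

lemma orth_Icc (N : ℕ) (hN : 0 < N) (m : ℤ) :
    ∑ j ∈ Finset.Icc 1 N, eN N (m * j) = if (N : ℤ) ∣ m then (N : ℂ) else 0 := by
  by_cases h : (N : ℤ) ∣ m
  · simp only [h, if_true]
    have : ∀ j ∈ Finset.Icc 1 N, eN N (m * j) = 1 := by
      intro j _
      exact eN_dvd N hN (Dvd.dvd.mul_right h _)
    rw [Finset.sum_congr rfl this]
    simp
  · simp only [h, if_false]
    have hne : eN N m ≠ 1 := eN_ne_one N hN h
    have : ∀ j ∈ Finset.Icc 1 N, eN N (m * j) = eN N m ^ j := by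
      intro j _
      rw [eN_pow]
      congr 1
      ring
    rw [Finset.sum_congr rfl this, ← Finset.Ico_add_one_right_eq_Icc, geom_sum_Ico hne (by omega),
      pow_succ, eN_pow, eN_dvd N hN ⟨m, rfl⟩, one_mul, pow_one, sub_self, zero_div]

lemma ramanujanSum_expand (N q : ℕ) (hq : q ∈ N.divisors) (m : ℤ) :
    ramanujanSum q m =
      ∑ j ∈ (Finset.Icc 1 N).filter (fun j => Nat.gcd j N = N / q),
        eN N ((j : ℤ) * m) := by
  obtain ⟨hqd, hN0⟩ := Nat.mem_divisors.mp hq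
  obtain ⟨d, hd⟩ := hqd
  have hq0 : 0 < q := Nat.pos_of_mem_divisors hq
  have hd0 : 0 < d := by
    rcases Nat.eq_zero_or_pos d with h | h
    · exfalso; apply hN0; rw [hd, h, mul_zero]
    · exact h
  have hNq : N / q = d := by rw [hd]; exact Nat.mul_div_cancel_left d hq0
  rw [hNq, ramanujanSum]
  refine Finset.sum_nbij' (fun k => k * d) (fun j => j / d) ?_ ?_ ?_ ?_ ?_
  · intro k hk
    simp only [Finset.mem_filter, Finset.mem_Icc] at hk ⊢
    obtain ⟨⟨hk1, hkq⟩, hgcd⟩ := hk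
    refine ⟨⟨Nat.one_le_iff_ne_zero.mpr (by positivity), ?_⟩, ?_⟩
    · rw [hd]; exact Nat.mul_le_mul_right d hkq
    · rw [hd, Nat.gcd_mul_right, hgcd, one_mul]
  · intro j hj
    simp only [Finset.mem_filter, Finset.mem_Icc] at hj ⊢
    obtain ⟨⟨hj1, hjN⟩, hgcd⟩ := hj
    have hdj : d ∣ j := hgcd ▸ Nat.gcd_dvd_left j N
    obtain ⟨k, rfl⟩ := hdj
    rw [Nat.mul_div_cancel_left k hd0]
    refine ⟨⟨?_, ?_⟩, ?_⟩
    · rcases Nat.eq_zero_or_pos k with h | h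
      · subst h; simp at hj1
      · exact h
    · have h1 : d * k ≤ d * q := by rw [hd, mul_comm q d] at hjN; exact hjN
      exact Nat.le_of_mul_le_mul_left h1 hd0
    · rw [hd, mul_comm d k, Nat.gcd_mul_right] at hgcd
      have : Nat.gcd k q * d = 1 * d := by rw [one_mul]; exact hgcd
      exact Nat.eq_of_mul_eq_mul_right hd0 this
  · intro k hk
    exact Nat.mul_div_cancel k hd0
  · intro j hj
    simp only [Finset.mem_filter, Finset.mem_Icc] at hj
    have hdj : d ∣ j := hj.2 ▸ Nat.gcd_dvd_left j N
    exact Nat.div_mul_cancel hdj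
  · intro k hk
    rw [eN]
    congr 1
    have hq' : (q : ℂ) ≠ 0 := by exact_mod_cast hq0.ne'
    have hd' : (d : ℂ) ≠ 0 := by exact_mod_cast hd0.ne'
    have hNc : (N : ℂ) = (q : ℂ) * d := by exact_mod_cast congrArg (Nat.cast : ℕ → ℂ) hd
    rw [hNc]
    push_cast
    field_simp

theorem ramanujanSum_tight_frame (N : ℕ) (hN : 0 < N) (x : Fin N → ℂ) :
    ∑ q ∈ N.divisors, ∑ k ∈ Finset.range N,
      ‖∑ n : Fin N, x n * (starRingEnd ℂ) (ramanujanSum q ((n : ℤ) - (k : ℤ)))‖ ^ 2 =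
    (N : ℝ) ^ 2 * ∑ n : Fin N, ‖x n‖ ^ 2 := by
  classical
  set T : ℕ → Finset ℕ := fun q => (Finset.Icc 1 N).filter (fun j => Nat.gcd j N = N / q)
    with hT
  set X : ℕ → ℂ := fun j => ∑ n : Fin N, x n * eN N (-((j : ℤ) * (n : ℤ))) with hX
  set S : ℕ → ℕ → ℂ := fun q k =>
    ∑ n : Fin N, x n * (starRingEnd ℂ) (ramanujanSum q ((n : ℤ) - (k : ℤ))) with hSdef
  -- Step 1: Fourier expansion of the frame coefficients
  have hS : ∀ q ∈ N.divisors, ∀ k : ℕ,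
      S q k = ∑ j ∈ T q, eN N ((j : ℤ) * k) * X j := by
    intro q hq k
    have hconj : ∀ n : Fin N, (starRingEnd ℂ) (ramanujanSum q ((n : ℤ) - (k : ℤ)))
        = ∑ j ∈ T q, eN N ((j : ℤ) * k) * eN N (-((j : ℤ) * (n : ℤ))) := by
      intro n
      rw [ramanujanSum_expand N q hq, map_sum]
      refine Finset.sum_congr rfl fun j hj => ?_
      rw [eN_conj, ← eN_add]
      congr 1
      ring
    rw [hSdef]
    simp only [hconj, Finset.mul_sum]
    rw [Finset.sum_comm]
    refine Finset.sum_congr rfl fun j hj => ?_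
    rw [hX, Finset.mul_sum]
    exact Finset.sum_congr rfl fun n _ => by ring
  -- Step 2: orthogonality over the shifts
  have hQ : ∀ q ∈ N.divisors,
      ∑ k ∈ Finset.range N, S q k * (starRingEnd ℂ) (S q k)
      = (N : ℂ) * ∑ j ∈ T q, X j * (starRingEnd ℂ) (X j) := by
    intro q hq
    have step : ∀ k ∈ Finset.range N, S q k * (starRingEnd ℂ) (S q k)
        = ∑ j ∈ T q, ∑ j' ∈ T q,
            (X j * (starRingEnd ℂ) (X j')) * eN N (((j : ℤ) - (j' : ℤ)) * k) := by
      intro k _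
      rw [hS q hq k, map_sum, Finset.sum_mul_sum]
      refine Finset.sum_congr rfl fun j hj => Finset.sum_congr rfl fun j' hj' => ?_
      rw [map_mul, eN_conj]
      have harg : ((j : ℤ) - (j' : ℤ)) * k = (j : ℤ) * k + -((j' : ℤ) * k) := by ring
      rw [harg, eN_add]
      ring
    rw [Finset.sum_congr rfl step, Finset.sum_comm]
    have inner : ∀ j ∈ T q,
        ∑ k ∈ Finset.range N, ∑ j' ∈ T q,
            (X j * (starRingEnd ℂ) (X j')) * eN N (((j : ℤ) - (j' : ℤ)) * k)
        = (X j * (starRingEnd ℂ) (X j)) * N := by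
      intro j hj
      rw [Finset.sum_comm]
      have inner2 : ∀ j' ∈ T q,
          ∑ k ∈ Finset.range N, (X j * (starRingEnd ℂ) (X j')) * eN N (((j : ℤ) - (j' : ℤ)) * k)
          = (X j * (starRingEnd ℂ) (X j')) *
              (if (N : ℤ) ∣ ((j : ℤ) - (j' : ℤ)) then (N : ℂ) else 0) := by
        intro j' _
        rw [← Finset.mul_sum, orth_range N hN]
      rw [Finset.sum_congr rfl inner2]
      rw [Finset.sum_eq_single_of_mem j hj]
      · rw [if_pos (by simp)]
      · intro j' hj' hne
        rw [if_neg, mul_zero]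
        intro hdvd
        have hjm := Finset.mem_Icc.mp (Finset.mem_filter.mp hj).1
        have hjm' := Finset.mem_Icc.mp (Finset.mem_filter.mp hj').1
        have hz : (j : ℤ) - (j' : ℤ) = 0 := by
          refine Int.eq_zero_of_abs_lt_dvd hdvd ?_
          rw [abs_lt]
          constructor <;> omega
        apply hne
        have : (j' : ℤ) = (j : ℤ) := by omega
        exact_mod_cast this
    rw [Finset.sum_congr rfl inner, ← Finset.sum_mul]
    ring
  -- Step 3: the divisor classes partition {1, ..., N}
  have hPart : ∀ f : ℕ → ℂ,
      ∑ q ∈ N.divisors, ∑ j ∈ T q, f j = ∑ j ∈ Finset.Icc 1 N, f j := by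
    intro f
    have : ∀ q ∈ N.divisors, ∑ j ∈ T q, f j
        = ∑ j ∈ Finset.Icc 1 N, (if Nat.gcd j N = N / q then f j else 0) := by
      intro q _
      rw [hT]
      exact (Finset.sum_filter _ _)
    rw [Finset.sum_congr rfl this, Finset.sum_comm]
    refine Finset.sum_congr rfl fun j hj => ?_
    have hgd : Nat.gcd j N ∣ N := Nat.gcd_dvd_right j N
    have hq0 : N / Nat.gcd j N ∈ N.divisors :=
      Nat.mem_divisors.mpr ⟨Nat.div_dvd_of_dvd hgd, hN.ne'⟩
    have hcond : ∀ q ∈ N.divisors,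
        (if Nat.gcd j N = N / q then f j else 0)
        = if q = N / Nat.gcd j N then f j else 0 := by
      intro q hq
      obtain ⟨hqd, _⟩ := Nat.mem_divisors.mp hq
      by_cases h : q = N / Nat.gcd j N
      · subst h
        rw [if_pos rfl, if_pos]
        rw [Nat.div_div_self hgd hN.ne']
      · rw [if_neg h, if_neg]
        intro hc
        apply h
        rw [hc]
        exact (Nat.div_div_self hqd hN.ne').symm
    rw [Finset.sum_congr rfl hcond, Finset.sum_ite_eq' N.divisors (N / Nat.gcd j N)
      (fun _ => f j), if_pos hq0]
  -- Step 4: Parseval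
  have hPar : ∑ j ∈ Finset.Icc 1 N, X j * (starRingEnd ℂ) (X j)
      = (N : ℂ) * ∑ n : Fin N, x n * (starRingEnd ℂ) (x n) := by
    have step : ∀ j ∈ Finset.Icc 1 N, X j * (starRingEnd ℂ) (X j)
        = ∑ n : Fin N, ∑ n' : Fin N,
            (x n * (starRingEnd ℂ) (x n')) * eN N ((((n' : ℤ)) - ((n : ℤ))) * j) := by
      intro j _
      rw [hX, map_sum, Finset.sum_mul_sum]
      refine Finset.sum_congr rfl fun n _ => Finset.sum_congr rfl fun n' _ => ?_
      rw [map_mul, eN_conj, neg_neg]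
      have harg : (((n' : ℤ)) - ((n : ℤ))) * j = -((j : ℤ) * (n : ℤ)) + (j : ℤ) * (n' : ℤ) := by
        ring
      rw [harg, eN_add]
      ring
    rw [Finset.sum_congr rfl step, Finset.sum_comm]
    have inner : ∀ n : Fin N,
        ∑ j ∈ Finset.Icc 1 N, ∑ n' : Fin N,
            (x n * (starRingEnd ℂ) (x n')) * eN N ((((n' : ℤ)) - ((n : ℤ))) * j)
        = (x n * (starRingEnd ℂ) (x n)) * N := by
      intro n
      rw [Finset.sum_comm]
      have inner2 : ∀ n' : Fin N,
          ∑ j ∈ Finset.Icc 1 N,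
              (x n * (starRingEnd ℂ) (x n')) * eN N ((((n' : ℤ)) - ((n : ℤ))) * j)
          = (x n * (starRingEnd ℂ) (x n')) *
              (if (N : ℤ) ∣ (((n' : ℤ)) - ((n : ℤ))) then (N : ℂ) else 0) := by
        intro n'
        rw [← Finset.mul_sum, orth_Icc N hN]
      rw [Finset.sum_congr rfl (fun n' _ => inner2 n')]
      rw [Finset.sum_eq_single_of_mem n (Finset.mem_univ n)]
      · rw [if_pos (by simp)]
      · intro n' _ hne
        rw [if_neg, mul_zero]
        intro hdvd
        have h1 : (n : ℤ) < N := by exact_mod_cast n.isLt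
        have h2 : (n' : ℤ) < N := by exact_mod_cast n'.isLt
        have h3 : (0 : ℤ) ≤ (n : ℤ) := Int.natCast_nonneg _
        have h4 : (0 : ℤ) ≤ (n' : ℤ) := Int.natCast_nonneg _
        have hz : ((n' : ℤ)) - ((n : ℤ)) = 0 := by
          refine Int.eq_zero_of_abs_lt_dvd hdvd ?_
          rw [abs_lt]
          omega
        apply hne
        have : ((n' : ℤ)) = ((n : ℤ)) := by omega
        exact Fin.ext (by exact_mod_cast this)
    rw [Finset.sum_congr rfl (fun n _ => inner n), ← Finset.sum_mul]
    ring
  -- Assemble the complex identity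
  have key : ∑ q ∈ N.divisors, ∑ k ∈ Finset.range N, S q k * (starRingEnd ℂ) (S q k)
      = (N : ℂ) ^ 2 * ∑ n : Fin N, x n * (starRingEnd ℂ) (x n) := by
    rw [Finset.sum_congr rfl hQ, ← Finset.mul_sum,
      hPart (fun j => X j * (starRingEnd ℂ) (X j)), hPar]
    ring
  -- Pass to real parts
  have habs : ∀ z : ℂ, ‖z‖ ^ 2 = (z * (starRingEnd ℂ) z).re := by
    intro z
    rw [Complex.mul_conj, Complex.sq_norm, Complex.ofReal_re]
  calc ∑ q ∈ N.divisors, ∑ k ∈ Finset.range N,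
        ‖∑ n : Fin N, x n * (starRingEnd ℂ) (ramanujanSum q ((n : ℤ) - (k : ℤ)))‖ ^ 2
      = ∑ q ∈ N.divisors, ∑ k ∈ Finset.range N, (S q k * (starRingEnd ℂ) (S q k)).re := by
        refine Finset.sum_congr rfl fun q _ => Finset.sum_congr rfl fun k _ => ?_
        rw [← habs]
    _ = (∑ q ∈ N.divisors, ∑ k ∈ Finset.range N, S q k * (starRingEnd ℂ) (S q k)).re := by
        rw [Complex.re_sum]
        exact Finset.sum_congr rfl fun q _ => (Complex.re_sum _ _).symm
    _ = ((N : ℂ) ^ 2 * ∑ n : Fin N, x n * (starRingEnd ℂ) (x n)).re := by rw [key]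
    _ = (N : ℝ) ^ 2 * ∑ n : Fin N, ‖x n‖ ^ 2 := by
        have hsum : ∑ n : Fin N, x n * (starRingEnd ℂ) (x n)
            = ((∑ n : Fin N, ‖x n‖ ^ 2 : ℝ) : ℂ) := by
          push_cast
          refine Finset.sum_congr rfl fun n _ => ?_
          rw [Complex.mul_conj]
          norm_cast
          exact (Complex.sq_norm _).symm
        rw [hsum]
        have : ((N : ℂ) ^ 2 * ((∑ n : Fin N, ‖x n‖ ^ 2 : ℝ) : ℂ))
            = (((N : ℝ) ^ 2 * ∑ n : Fin N, ‖x n‖ ^ 2 : ℝ) : ℂ) := by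
          push_cast
          ring
        rw [this, Complex.ofReal_re]
end

section
/- (Shifted Ramanujan sums span orthogonal subspaces) Let N be a positive integer and q ≠ q' two distinct divisors of N. Then for all shifts l, m ∈ Z, the vectors L_l c_q and L_m c_{q'} in ℓ²(Z_N) are orthogonal: Σ_{n=0}^{N−1} c_q(n−l)·c_{q'}(n−m) = 0. -/
open Finset Complex

lemma geom_zero {w : ℂ} {N : ℕ} (h1 : w ≠ 1) (hN : w ^ N = 1) :
    ∑ n ∈ Finset.range N, w ^ n = 0 := by
  rw [geom_sum_eq h1, hN, sub_self, zero_div]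

lemma key_nt (q q' k k' : ℕ) (hq : 0 < q) (hq' : 0 < q')
    (hk : Nat.gcd k q = 1) (hk' : Nat.gcd k' q' = 1) (hne : q ≠ q')
    (t : ℤ) (h : (k : ℤ) * q' + k' * q = t * (q * q')) : False := by
  have h1 : (q : ℤ) ∣ (k : ℤ) * q' := ⟨t * q' - k', by linarith⟩
  have h2 : (q' : ℤ) ∣ (k' : ℤ) * q := ⟨t * q - k, by linarith⟩
  have c1 : IsCoprime (q : ℤ) (k : ℤ) := by
    rw [Int.isCoprime_iff_gcd_eq_one, Int.gcd_natCast_natCast, Nat.gcd_comm]; exact hk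
  have c2 : IsCoprime (q' : ℤ) (k' : ℤ) := by
    rw [Int.isCoprime_iff_gcd_eq_one, Int.gcd_natCast_natCast, Nat.gcd_comm]; exact hk'
  have d1 : (q : ℤ) ∣ (q' : ℤ) := c1.dvd_of_dvd_mul_left h1
  have d2 : (q' : ℤ) ∣ (q : ℤ) := c2.dvd_of_dvd_mul_left h2
  exact hne (Nat.dvd_antisymm (Int.ofNat_dvd.mp d1) (Int.ofNat_dvd.mp d2))

theorem ramanujanSum_shifts_orthogonal (N q q' : ℕ) (hN : 0 < N)
    (hq : q ∣ N) (hq' : q' ∣ N) (hne : q ≠ q') (l m : ℤ) :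
    ∑ n ∈ Finset.range N,
      ramanujanSum q ((n : ℤ) - l) * ramanujanSum q' ((n : ℤ) - m) = 0 := by
  have hq0 : 0 < q := Nat.pos_of_dvd_of_pos hq hN
  have hq'0 : 0 < q' := Nat.pos_of_dvd_of_pos hq' hN
  obtain ⟨a, ha⟩ := hq
  obtain ⟨b, hb⟩ := hq'
  unfold ramanujanSum
  simp_rw [Finset.sum_mul, Finset.mul_sum]
  rw [Finset.sum_comm]
  refine Finset.sum_eq_zero fun k hk => ?_
  rw [Finset.sum_comm]
  refine Finset.sum_eq_zero fun k' hk' => ?_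
  simp only [Finset.mem_filter, Finset.mem_Icc] at hk hk'
  set u : ℂ := 2 * (Real.pi : ℂ) * Complex.I * k / q with hu
  set v : ℂ := 2 * (Real.pi : ℂ) * Complex.I * k' / q' with hv
  have hqc : (q : ℂ) ≠ 0 := Nat.cast_ne_zero.mpr hq0.ne'
  have hq'c : (q' : ℂ) ≠ 0 := Nat.cast_ne_zero.mpr hq'0.ne'
  have hterm : ∀ n : ℕ,
      Complex.exp (2 * (Real.pi : ℂ) * Complex.I * k * (((n : ℤ) - l : ℤ) : ℂ) / q) *
        Complex.exp (2 * (Real.pi : ℂ) * Complex.I * k' * (((n : ℤ) - m : ℤ) : ℂ) / q')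
      = (Complex.exp u * Complex.exp v) ^ n *
        (Complex.exp (-(l : ℂ) * u) * Complex.exp (-(m : ℂ) * v)) := by
    intro n
    rw [mul_pow, ← Complex.exp_nat_mul, ← Complex.exp_nat_mul, ← Complex.exp_add,
      ← Complex.exp_add, ← Complex.exp_add, ← Complex.exp_add]
    congr 1
    rw [hu, hv]
    push_cast
    ring
  simp_rw [hterm, ← Finset.sum_mul]
  rw [geom_zero, zero_mul]
  · -- w ≠ 1
    rw [← Complex.exp_add, Ne, Complex.exp_eq_one_iff]
    rintro ⟨t, ht⟩
    have hpi : (Real.pi : ℂ) ≠ 0 := Complex.ofReal_ne_zero.mpr Real.pi_ne_zero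
    have h2pi : (2 * (Real.pi : ℂ) * Complex.I) ≠ 0 := by
      simp [Real.pi_ne_zero, Complex.I_ne_zero]
    have hC : (k : ℂ) * q' + k' * q = t * (q * q') := by
      rw [hu, hv] at ht
      field_simp at ht
      refine mul_left_cancel₀ h2pi ?_
      linear_combination (2 * (Real.pi : ℂ) * Complex.I) * ht
    have hZ : (k : ℤ) * q' + k' * q = t * (q * q') := by exact_mod_cast hC
    exact key_nt q q' k k' hq0 hq'0 hk.2 hk'.2 hne t hZ
  · rw [mul_pow, ← Complex.exp_nat_mul, ← Complex.exp_nat_mul, ← Complex.exp_add]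
    have : (N : ℂ) * u + (N : ℂ) * v = ((k * a + k' * b : ℕ) : ℂ) * (2 * Real.pi * Complex.I) := by
      rw [hu, hv]
      have haC : (N : ℂ) = q * a := by exact_mod_cast ha
      have hbC : (N : ℂ) = q' * b := by exact_mod_cast hb
      have hab : (q : ℂ) * a = (q' : ℂ) * b := by rw [← haC, ← hbC]
      have hx := mul_inv_cancel₀ hqc
      have hy := mul_inv_cancel₀ hq'c
      rw [haC]
      push_cast
      linear_combination (2 * (Real.pi : ℂ) * Complex.I * (k : ℂ) * (a : ℂ)) * hx +
        (2 * (Real.pi : ℂ) * Complex.I * (k' : ℂ) * (b : ℂ)) * hy +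
        (2 * (Real.pi : ℂ) * Complex.I * (k' : ℂ) * ((q' : ℂ))⁻¹) * hab
    rw [this]
    exact_mod_cast Complex.exp_int_mul_two_pi_mul_I ((k * a + k' * b : ℕ) : ℤ)
end

section
/- Let N = 2d with d even (so 4 | N), and let q_1, …, q_K be all divisors of N. Then for every divisor q of N, Σ_{ℓ=0}^{d−1} c_q(2ℓ+1)·e^{−2πiℓ/d} = 0; that is, the Zak transform values Zc_q(1,1) all vanish. Consequently the system {L_{2k} c_{q_i} : 0 ≤ k ≤ d−1, 1 ≤ i ≤ K} does not span ℓ²(Z_N) and hence is not a frame. -/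
open Finset Complex

lemma geom_root (d : ℕ) (hd : 0 < d) (j : ℤ) :
    ∑ ℓ ∈ Finset.range d, Complex.exp (2 * (Real.pi : ℂ) * Complex.I * (j : ℂ) / (d : ℂ)) ^ ℓ
      = if (d : ℤ) ∣ j then (d : ℂ) else 0 := by
  have hd0 : (d : ℂ) ≠ 0 := Nat.cast_ne_zero.mpr hd.ne'
  by_cases h : (d : ℤ) ∣ j
  · obtain ⟨m, rfl⟩ := h
    rw [if_pos ⟨m, rfl⟩]
    have : (2 * (Real.pi : ℂ) * Complex.I * ((((d : ℤ) * m : ℤ)) : ℂ) / (d : ℂ))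
        = (m : ℂ) * (2 * (Real.pi : ℂ) * Complex.I) := by
      push_cast; field_simp
    rw [this, Complex.exp_int_mul_two_pi_mul_I]
    simp
  · rw [if_neg h]
    set z := Complex.exp (2 * (Real.pi : ℂ) * Complex.I * (j : ℂ) / (d : ℂ)) with hz
    have hzd : z ^ d = 1 := by
      rw [hz, ← Complex.exp_nat_mul]
      have : (d : ℂ) * (2 * (Real.pi : ℂ) * Complex.I * (j : ℂ) / (d : ℂ))
          = (j : ℂ) * (2 * (Real.pi : ℂ) * Complex.I) := by field_simp
      rw [this, Complex.exp_int_mul_two_pi_mul_I]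
    have hz1 : z ≠ 1 := by
      intro h1
      rw [hz, Complex.exp_eq_one_iff] at h1
      obtain ⟨n, hn⟩ := h1
      apply h
      refine ⟨n, ?_⟩
      rw [mul_comm]
      have h2pi : (2 * (Real.pi : ℂ) * Complex.I) ≠ 0 := by
        simp [Real.pi_ne_zero, Complex.I_ne_zero]
      have : (j : ℂ) = (n : ℂ) * (d : ℂ) := by
        field_simp at hn
        have := hn
        apply mul_right_cancel₀ h2pi
        ring_nf
        ring_nf at this
        linear_combination (2 * (Real.pi : ℂ) * Complex.I) * this
      exact_mod_cast this
    rw [geom_sum_eq hz1, hzd]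
    simp

lemma rs_periodic (q : ℕ) (hq : 0 < q) (n m : ℤ) :
    ramanujanSum q (n + q * m) = ramanujanSum q n := by
  unfold ramanujanSum
  refine Finset.sum_congr rfl fun k _ => ?_
  have hq0 : (q : ℂ) ≠ 0 := Nat.cast_ne_zero.mpr hq.ne'
  have : (2 * (Real.pi : ℂ) * Complex.I * (k : ℂ) * (((n + q * m) : ℤ) : ℂ) / (q : ℂ))
      = 2 * (Real.pi : ℂ) * Complex.I * (k : ℂ) * (n : ℂ) / (q : ℂ)
        + (((k : ℤ) * m : ℤ) : ℂ) * (2 * (Real.pi : ℂ) * Complex.I) := by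
    push_cast; field_simp
  rw [this, Complex.exp_add, Complex.exp_int_mul_two_pi_mul_I, mul_one]

lemma part1 (d : ℕ) (hd : 0 < d) (h2 : 2 ∣ d) (q : ℕ) (hq : q ∣ 2 * d) :
    ∑ ℓ ∈ Finset.range d,
      ramanujanSum q ((2 * ℓ + 1 : ℕ) : ℤ) *
        Complex.exp (-(2 * (Real.pi : ℂ) * Complex.I * (ℓ : ℂ) / (d : ℂ))) = 0 := by
  obtain ⟨r, hr⟩ := hq
  have hq0 : 0 < q := by
    rcases Nat.eq_zero_or_pos q with h | h
    · subst h; simp at hr; omega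
    · exact h
  have hr0 : 0 < r := by
    rcases Nat.eq_zero_or_pos r with h | h
    · subst h; simp at hr; omega
    · exact h
  have hdC : (d : ℂ) ≠ 0 := Nat.cast_ne_zero.mpr hd.ne'
  have hqC : (q : ℂ) ≠ 0 := Nat.cast_ne_zero.mpr hq0.ne'
  have hC : (q : ℂ) * (r : ℂ) = 2 * (d : ℂ) := by exact_mod_cast hr.symm
  set A := (Finset.Icc 1 q).filter (fun k => Nat.gcd k q = 1) with hA
  have key : ∀ ℓ ∈ Finset.range d,
      ramanujanSum q ((2 * ℓ + 1 : ℕ) : ℤ) *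
        Complex.exp (-(2 * (Real.pi : ℂ) * Complex.I * (ℓ : ℂ) / (d : ℂ)))
      = ∑ k ∈ A, Complex.exp (2 * (Real.pi : ℂ) * Complex.I * (k : ℂ) / (q : ℂ)) *
          Complex.exp (2 * (Real.pi : ℂ) * Complex.I * ((((k : ℤ) * r - 1) : ℤ) : ℂ) / (d : ℂ)) ^ ℓ := by
    intro ℓ hℓ
    unfold ramanujanSum
    rw [Finset.sum_mul]
    refine Finset.sum_congr rfl fun k _ => ?_
    rw [← Complex.exp_add, ← Complex.exp_nat_mul, ← Complex.exp_add]
    congr 1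
    push_cast
    field_simp
    ring_nf
    linear_combination (-(k : ℂ) * (ℓ : ℂ)) * hC
  rw [Finset.sum_congr rfl key, Finset.sum_comm]
  have step2 : ∀ k ∈ A,
      (∑ ℓ ∈ Finset.range d, Complex.exp (2 * (Real.pi : ℂ) * Complex.I * (k : ℂ) / (q : ℂ)) *
          Complex.exp (2 * (Real.pi : ℂ) * Complex.I * ((((k : ℤ) * r - 1) : ℤ) : ℂ) / (d : ℂ)) ^ ℓ)
      = Complex.exp (2 * (Real.pi : ℂ) * Complex.I * (k : ℂ) / (q : ℂ)) *
          (if (d : ℤ) ∣ ((k : ℤ) * r - 1) then (d : ℂ) else 0) := by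
    intro k _
    rw [← Finset.mul_sum, geom_root d hd]
  rw [Finset.sum_congr rfl step2]
  by_cases hq2 : q = 2 * d
  · subst hq2
    have hr1 : r = 1 := by
      have h1 : 2 * d * 1 = 2 * d * r := by omega
      exact (Nat.eq_of_mul_eq_mul_left (by omega) h1).symm
    subst hr1
    simp only [Nat.cast_one, mul_one, mul_ite, mul_zero]
    rw [← Finset.sum_filter]
    have hset : A.filter (fun k : ℕ => (d : ℤ) ∣ ((k : ℤ) - 1)) = ({1, d + 1} : Finset ℕ) := by
      ext k
      simp only [hA, Finset.mem_filter, Finset.mem_Icc, Finset.mem_insert,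
        Finset.mem_singleton]
      constructor
      · rintro ⟨⟨⟨h1, h2'⟩, hg⟩, hdvd⟩
        have hk1 : d ∣ k - 1 := by
          have hcast : ((k - 1 : ℕ) : ℤ) = (k : ℤ) - 1 := by omega
          rw [← hcast] at hdvd
          exact_mod_cast hdvd
        obtain ⟨c, hc⟩ := hk1
        have hc1 : c ≤ 1 := by
          by_contra hcc
          push_neg at hcc
          have : d * 2 ≤ d * c := Nat.mul_le_mul_left d hcc
          omega
        interval_cases c
        · simp at hc; omega
        · simp at hc; omega
      · rintro (rfl | rfl)
        · refine ⟨⟨⟨le_refl 1, by omega⟩, Nat.gcd_one_left _⟩, by simp⟩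
        · refine ⟨⟨⟨by omega, by omega⟩, ?_⟩, ?_⟩
          · have c1 : Nat.Coprime (d + 1) d := by
              simp [Nat.coprime_self_add_left]
            have c2 : Nat.Coprime (d + 1) 2 :=
              Nat.coprime_comm.mp ((Nat.prime_two.coprime_iff_not_dvd).mpr (by omega))
            exact Nat.Coprime.mul_right c2 c1
          · push_cast; simp
    rw [hset, Finset.sum_insert (by simp; omega), Finset.sum_singleton]
    have e2 : Complex.exp (2 * (Real.pi : ℂ) * Complex.I * ((d + 1 : ℕ) : ℂ) / ((2 * d : ℕ) : ℂ))
        = - Complex.exp (2 * (Real.pi : ℂ) * Complex.I * ((1 : ℕ) : ℂ) / ((2 * d : ℕ) : ℂ)) := by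
      have harg : 2 * (Real.pi : ℂ) * Complex.I * ((d + 1 : ℕ) : ℂ) / ((2 * d : ℕ) : ℂ)
          = 2 * (Real.pi : ℂ) * Complex.I * ((1 : ℕ) : ℂ) / ((2 * d : ℕ) : ℂ)
            + (Real.pi : ℂ) * Complex.I := by
        push_cast
        field_simp
        ring
      rw [harg, Complex.exp_add, Complex.exp_pi_mul_I, mul_neg_one]
    rw [e2]
    ring
  · rw [Finset.sum_eq_zero]
    intro k hk
    rw [if_neg, mul_zero]
    intro hdvd
    -- derive contradiction
    have h2Z : (2 : ℤ) ∣ (d : ℤ) := by exact_mod_cast h2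
    have hodd : Odd ((k : ℤ) * (r : ℤ)) := by
      obtain ⟨c, hc⟩ := dvd_trans h2Z hdvd
      exact ⟨c, by linarith⟩
    have hrodd : Odd (r : ℤ) := (Int.odd_mul.mp hodd).2
    have hroddN : Odd r := by exact_mod_cast hrodd
    have hcop : Nat.Coprime r d := by
      have hg1 : ((Nat.gcd r d : ℕ) : ℤ) ∣ (k : ℤ) * (r : ℤ) :=
        Dvd.dvd.mul_left (Int.natCast_dvd_natCast.mpr (Nat.gcd_dvd_left r d)) _
      have hg2 : ((Nat.gcd r d : ℕ) : ℤ) ∣ ((k : ℤ) * (r : ℤ) - 1) :=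
        dvd_trans (Int.natCast_dvd_natCast.mpr (Nat.gcd_dvd_right r d)) hdvd
      have hg3 : ((Nat.gcd r d : ℕ) : ℤ) ∣ 1 := by
        have := dvd_sub hg1 hg2
        simpa using this
      have : Nat.gcd r d ∣ 1 := by exact_mod_cast hg3
      exact Nat.dvd_one.mp this
    have hr2d : r ∣ 2 * d := ⟨q, by rw [hr, mul_comm]⟩
    have hr2 : r ∣ 2 := hcop.dvd_of_dvd_mul_right hr2d
    have : r = 1 := by
      have := Nat.le_of_dvd (by norm_num) hr2
      obtain ⟨m, hm⟩ := hroddN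
      omega
    subst this
    omega

lemma shift (d q : ℕ) (hd : 0 < d) (hq : q ∣ 2 * d) (k : ℕ) (hk : k < d) :
    ∑ ℓ ∈ Finset.range d,
      ramanujanSum q (((2 * ℓ + 1 : ℕ) : ℤ) - 2 * (k : ℤ)) *
        Complex.exp (-(2 * (Real.pi : ℂ) * Complex.I * (ℓ : ℂ) / (d : ℂ)))
    = Complex.exp (-(2 * (Real.pi : ℂ) * Complex.I * (k : ℂ) / (d : ℂ))) *
      ∑ ℓ ∈ Finset.range d,
        ramanujanSum q ((2 * ℓ + 1 : ℕ) : ℤ) *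
          Complex.exp (-(2 * (Real.pi : ℂ) * Complex.I * (ℓ : ℂ) / (d : ℂ))) := by
  obtain ⟨r, hr⟩ := hq
  have hq0 : 0 < q := by
    rcases Nat.eq_zero_or_pos q with h | h
    · subst h; simp at hr; omega
    · exact h
  have hdC : (d : ℂ) ≠ 0 := Nat.cast_ne_zero.mpr hd.ne'
  rw [Finset.mul_sum]
  refine Finset.sum_nbij' (fun a => (a + (d - k)) % d) (fun a => (a + k) % d)
    ?_ ?_ ?_ ?_ ?_
  · intro a _; exact Finset.mem_range.mpr (Nat.mod_lt _ hd)
  · intro a _; exact Finset.mem_range.mpr (Nat.mod_lt _ hd)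
  · intro a ha
    show ((a + (d - k)) % d + k) % d = a
    rw [Nat.mod_add_mod, show a + (d - k) + k = a + d by omega, Nat.add_mod_right,
      Nat.mod_eq_of_lt (Finset.mem_range.mp ha)]
  · intro a ha
    show ((a + k) % d + (d - k)) % d = a
    rw [Nat.mod_add_mod, show a + k + (d - k) = a + d by omega, Nat.add_mod_right,
      Nat.mod_eq_of_lt (Finset.mem_range.mp ha)]
  · intro a ha
    set t := (a + (d - k)) / d with ht
    set m := (a + (d - k)) % d with hm
    have hdm : d * t + m = a + (d - k) := Nat.div_add_mod _ _
    have hmd : m < d := Nat.mod_lt _ hd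
    have hdmZ : (d : ℤ) * t + m = a + d - k := by
      push_cast [← hdm]; omega
    have hqrZ : (q : ℤ) * r = 2 * d := by exact_mod_cast hr.symm
    have harg : ((2 * m + 1 : ℕ) : ℤ)
        = (((2 * a + 1 : ℕ) : ℤ) - 2 * (k : ℤ)) + q * ((r : ℤ) - r * t) := by
      push_cast
      linear_combination ((t : ℤ) - 1) * hqrZ + 2 * hdmZ
    have hexp : Complex.exp (-(2 * (Real.pi : ℂ) * Complex.I * (k : ℂ) / (d : ℂ))) *
          Complex.exp (-(2 * (Real.pi : ℂ) * Complex.I * (m : ℂ) / (d : ℂ)))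
        = Complex.exp (-(2 * (Real.pi : ℂ) * Complex.I * (a : ℂ) / (d : ℂ))) := by
      rw [← Complex.exp_add]
      have hmC : (m : ℂ) = (a : ℂ) + (d : ℂ) - (k : ℂ) - (d : ℂ) * ((t : ℤ) : ℂ) := by
        have h1 := congrArg (Int.cast : ℤ → ℂ) hdmZ
        push_cast at h1
        push_cast
        linear_combination h1
      have harg2 : -(2 * (Real.pi : ℂ) * Complex.I * (k : ℂ) / (d : ℂ))
            + -(2 * (Real.pi : ℂ) * Complex.I * (m : ℂ) / (d : ℂ))
          = -(2 * (Real.pi : ℂ) * Complex.I * (a : ℂ) / (d : ℂ))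
            + (((t : ℤ) - 1 : ℤ) : ℂ) * (2 * (Real.pi : ℂ) * Complex.I) := by
        rw [hmC]
        push_cast
        field_simp
        ring
      rw [harg2, Complex.exp_add, Complex.exp_int_mul_two_pi_mul_I, mul_one]
    rw [harg, rs_periodic q hq0]
    calc ramanujanSum q (((2 * a + 1 : ℕ) : ℤ) - 2 * (k : ℤ)) *
          Complex.exp (-(2 * (Real.pi : ℂ) * Complex.I * (a : ℂ) / (d : ℂ)))
        = ramanujanSum q (((2 * a + 1 : ℕ) : ℤ) - 2 * (k : ℤ)) *
            (Complex.exp (-(2 * (Real.pi : ℂ) * Complex.I * (k : ℂ) / (d : ℂ))) *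
              Complex.exp (-(2 * (Real.pi : ℂ) * Complex.I * (m : ℂ) / (d : ℂ)))) := by
          rw [hexp]
      _ = Complex.exp (-(2 * (Real.pi : ℂ) * Complex.I * (k : ℂ) / (d : ℂ))) *
            (ramanujanSum q (((2 * a + 1 : ℕ) : ℤ) - 2 * (k : ℤ)) *
              Complex.exp (-(2 * (Real.pi : ℂ) * Complex.I * (m : ℂ) / (d : ℂ)))) := by
          ring

theorem notspan (d : ℕ) (hd : 0 < d) (h2 : 2 ∣ d) :
    Submodule.span ℂ
      {v : Fin (2 * d) → ℂ | ∃ k < d, ∃ q ∈ (2 * d).divisors,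
        v = fun n : Fin (2 * d) => ramanujanSum q (((n : ℕ) : ℤ) - 2 * (k : ℤ))} ≠ ⊤ := by
  intro htop
  set S : Set (Fin (2 * d) → ℂ) := {v : Fin (2 * d) → ℂ | ∃ k < d, ∃ q ∈ (2 * d).divisors,
        v = fun n : Fin (2 * d) => ramanujanSum q (((n : ℕ) : ℤ) - 2 * (k : ℤ))} with hS
  have h2d : 0 < 2 * d := by omega
  set F : ℕ → Fin (2 * d) := fun ℓ => ⟨(2 * ℓ + 1) % (2 * d), Nat.mod_lt _ h2d⟩ with hF
  have hFval : ∀ ℓ < d, ((F ℓ : Fin (2 * d)) : ℕ) = 2 * ℓ + 1 := by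
    intro ℓ hℓ
    simp only [hF]
    exact Nat.mod_eq_of_lt (by omega)
  set P : (Fin (2 * d) → ℂ) → Prop := fun v =>
    (∑ ℓ ∈ Finset.range d, v (F ℓ) *
      Complex.exp (-(2 * (Real.pi : ℂ) * Complex.I * (ℓ : ℂ) / (d : ℂ)))) = 0 with hP
  have hall : ∀ v ∈ Submodule.span ℂ S, P v := by
    intro v hv
    refine Submodule.span_induction (p := fun v _ => P v) ?_ ?_ ?_ ?_ hv
    · rintro x hx
      obtain ⟨k, hk, q, hqmem, rfl⟩ := hx
      obtain ⟨hqdvd, -⟩ := Nat.mem_divisors.mp hqmem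
      show (∑ ℓ ∈ Finset.range d,
        ramanujanSum q (((F ℓ : ℕ) : ℤ) - 2 * (k : ℤ)) *
          Complex.exp (-(2 * (Real.pi : ℂ) * Complex.I * (ℓ : ℂ) / (d : ℂ)))) = 0
      have : ∀ ℓ ∈ Finset.range d,
          ramanujanSum q (((F ℓ : ℕ) : ℤ) - 2 * (k : ℤ)) *
            Complex.exp (-(2 * (Real.pi : ℂ) * Complex.I * (ℓ : ℂ) / (d : ℂ)))
          = ramanujanSum q (((2 * ℓ + 1 : ℕ) : ℤ) - 2 * (k : ℤ)) *
            Complex.exp (-(2 * (Real.pi : ℂ) * Complex.I * (ℓ : ℂ) / (d : ℂ))) := by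
        intro ℓ hℓ
        rw [hFval ℓ (Finset.mem_range.mp hℓ)]
      rw [Finset.sum_congr rfl this, shift d q hd hqdvd k hk, part1 d hd h2 q hqdvd, mul_zero]
    · simp [hP]
    · intro x y _ _ hx hy
      simp only [hP, Pi.add_apply, add_mul] at *
      rw [Finset.sum_add_distrib, hx, hy, add_zero]
    · intro a x _ hx
      simp only [hP, Pi.smul_apply, smul_eq_mul, mul_assoc] at *
      rw [← Finset.mul_sum, hx, mul_zero]
  have hone : P (Pi.single (F 0) (1 : ℂ)) := by
    apply hall
    rw [htop]; trivial
  rw [hP] at hone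
  have hsingle : ∀ ℓ ∈ Finset.range d,
      Pi.single (M := fun _ : Fin (2 * d) => ℂ) (F 0) (1 : ℂ) (F ℓ) *
        Complex.exp (-(2 * (Real.pi : ℂ) * Complex.I * (ℓ : ℂ) / (d : ℂ)))
      = if ℓ = 0 then Complex.exp (-(2 * (Real.pi : ℂ) * Complex.I * (ℓ : ℂ) / (d : ℂ))) else 0 := by
    intro ℓ hℓ
    rcases eq_or_ne ℓ 0 with rfl | hne
    · simp
    · rw [if_neg hne]
      have hneF : F ℓ ≠ F 0 := by
        intro hFe
        apply hne
        have h1 := hFval ℓ (Finset.mem_range.mp hℓ)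
        have h0 := hFval 0 hd
        have : (F ℓ : ℕ) = (F 0 : ℕ) := by rw [hFe]
        omega
      rw [Pi.single_eq_of_ne hneF, zero_mul]
  rw [Finset.sum_congr rfl hsingle, Finset.sum_ite_eq' (Finset.range d) 0] at hone
  rw [if_pos (Finset.mem_range.mpr hd)] at hone
  simp at hone


theorem zak_one_one_vanishes_and_not_frame (d : ℕ) (hd : 0 < d) (h2 : 2 ∣ d) :
    (∀ q : ℕ, q ∣ 2 * d →
      ∑ ℓ ∈ Finset.range d,
        ramanujanSum q ((2 * ℓ + 1 : ℕ) : ℤ) *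
          Complex.exp (-(2 * (Real.pi : ℂ) * Complex.I * (ℓ : ℂ) / (d : ℂ))) = 0) ∧
    Submodule.span ℂ
      {v : Fin (2 * d) → ℂ | ∃ k < d, ∃ q ∈ (2 * d).divisors,
        v = fun n : Fin (2 * d) => ramanujanSum q (((n : ℕ) : ℤ) - 2 * (k : ℤ))} ≠ ⊤ := by
  exact ⟨fun q hq => part1 d hd h2 q hq, notspan d hd h2⟩
end
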